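/- arXiv:2009.03225 — 2 statements merged into one kernel-verified Lean document; each statement's English description precedes it below -/
import Mathlib

section
/- Let λ be an admissible coefficient sequence satisfying effective Sato–Tate. Then there is a constant C' > 0 (depending on λ) such that for all y ≥ 16, ∑_{p prime, p > y, λ(p) = 0} 1/p ≤ C'·(log log y)²·(log y)^{−1/2}. -/
open scoped BigOperators
open Filter MeasureTheory

attribute [local instance] Classical.propDecidable

noncomputable section

/-- Number of primes `p ≤ x`. -/
def primePi (x : ℝ) : ℕ := Nat.card {p : ℕ | p.Prime ∧ (p : ℝ) ≤ x}

/-- `lam` is an admissible coefficient sequence: multiplicative, `lam 1 = 1`,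
and `lam p ∈ [-2,2]` at primes. -/
def IsAdmissibleSeq (lam : ℕ → ℝ) : Prop :=
  lam 1 = 1 ∧ (∀ m n : ℕ, Nat.Coprime m n → lam (m * n) = lam m * lam n) ∧
    ∀ p : ℕ, p.Prime → lam p ∈ Set.Icc (-2 : ℝ) 2

/-- Sato–Tate measure of the interval `[a,b] ⊆ [0,π]`. -/
def muST (a b : ℝ) : ℝ := (2 / Real.pi) * ∫ θ in a..b, Real.sin θ ^ 2

/-- Effective Sato–Tate for the angles `θ_p = arccos (lam p / 2)`. -/
def EffST (lam : ℕ → ℝ) : Prop :=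
  ∃ C > (0 : ℝ), ∀ a b : ℝ, 0 ≤ a → a ≤ b → b ≤ Real.pi → ∀ x : ℝ, 16 ≤ x →
    |(Nat.card {p : ℕ | p.Prime ∧ (p : ℝ) ≤ x ∧ Real.arccos (lam p / 2) ∈ Set.Icc a b} : ℝ)
        - muST a b * (primePi x : ℝ)|
      ≤ C * Real.log (Real.log x) * Real.log x ^ (-(1 : ℝ) / 2) * (primePi x : ℝ)

/-- The logarithmic integral `∫_2^Y dt / log t`. -/
def Li (Y : ℝ) : ℝ := ∫ t in (2 : ℝ)..Y, 1 / Real.log t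

/-- Effective Sato–Tate in arithmetic progressions. -/
def EffSTAP (lam : ℕ → ℝ) : Prop :=
  ∀ D : ℝ, 1 ≤ D → ∀ ε : ℝ, 0 < ε → ∃ C > (0 : ℝ), ∃ Y₀ : ℝ, ∀ Y : ℝ, Y₀ ≤ Y →
    ∀ q : ℕ, 2 ≤ q → (q : ℝ) ≤ Real.log (Real.log Y) ^ D →
      ∀ a : ℕ, Nat.Coprime a q → ∀ α β : ℝ, -2 ≤ α → α ≤ β → β ≤ 2 →
        |(Nat.card {p : ℕ | p.Prime ∧ (p : ℝ) ≤ Y ∧ p % q = a % q ∧ lam p ∈ Set.Icc α β} : ℝ)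
            - Li Y / (Real.pi * (Nat.totient q : ℝ)) * ∫ t in α..β, Real.sqrt (1 - (t / 2) ^ 2)|
          ≤ C * Li Y * Real.log (Real.log Y) ^ (-(1 : ℝ) / 2 + ε) / (Nat.totient q : ℝ)

/-- Hypothesis (A): nonvanishing and lower bounds at prime powers. -/
def HypA (lam : ℕ → ℝ) : Prop :=
  ∃ C > (0 : ℝ), ∀ p : ℕ, p.Prime → lam p ≠ 0 → ∀ ν : ℕ, 1 ≤ ν →
    lam (p ^ ν) ≠ 0 ∧ (p : ℝ) ^ (-(C * (ν : ℝ))) ≤ |lam (p ^ ν)|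

/-- The discriminant `∏_{i<j} (a_j - a_i)`. -/
def Delta {k : ℕ} (a : Fin k → ℕ) : ℤ :=
  ∏ q ∈ Finset.univ.filter (fun q : Fin k × Fin k => q.1 < q.2), ((a q.2 : ℤ) - (a q.1 : ℤ))

/-- The tuple `a` is admissible for the family `lam`. -/
def TupleAdmissible {k : ℕ} (lam : Fin k → ℕ → ℝ) (a : Fin k → ℕ) : Prop :=
  ∀ p : ℕ, p.Prime → ((p : ℤ) ∣ Delta a) → (∏ j, lam j p) = 0 →
    ∃ c : ℕ, ¬ ((p : ℤ) ∣ ∏ j, ((c : ℤ) + (a j : ℤ)))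

/-- `X(x) = #{n ≤ x : n + a_j ∈ N for all j}` with `N = ∩_j N_j`. -/
def Xcount {k : ℕ} (lam : Fin k → ℕ → ℝ) (a : Fin k → ℕ) (x : ℕ) : ℕ :=
  Nat.card {n : ℕ | n ≤ x ∧ ∀ i j : Fin k, lam i (n + a j) ≠ 0}

/-- Real-argument version of `Xcount`. -/
def XcountR {k : ℕ} (lam : Fin k → ℕ → ℝ) (a : Fin k → ℕ) (x : ℝ) : ℕ :=
  Nat.card {n : ℕ | (n : ℝ) ≤ x ∧ ∀ i j : Fin k, lam i (n + a j) ≠ 0}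

/-- The Erdős–Kac normalizing constant `c = (1 + π²/6)/2`. -/
def cEK : ℝ := (1 + Real.pi ^ 2 / 6) / 2

/-- The normalized quantity `X_j(n)`. -/
def XEK (lam : ℕ → ℝ) (n : ℕ) : ℝ :=
  (Real.log |lam n| + (1 / 2) * Real.log (Real.log n)) / Real.sqrt (cEK * Real.log (Real.log n))

/-- Membership `n ∈ N^{(ξ)}(X)`. -/
def memNxi {k : ℕ} (lam : Fin k → ℕ → ℝ) (ξ : ℝ → ℝ) (X : ℝ) (n : ℕ) : Prop :=
  (n : ℝ) ≤ X ∧ ∀ j, lam j n ≠ 0 ∧ ∀ p : ℕ, p.Prime → p ∣ n → ξ X ≤ |lam j p|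

/-- Elliott's conjecture on correlations of bounded multiplicative functions. -/
def ElliottConjecture : Prop :=
  ∀ k : ℕ, 1 ≤ k → ∀ g : Fin k → ℕ → ℂ,
    (∀ j, (∀ n, ‖g j n‖ ≤ 1) ∧ g j 1 = 1 ∧
        ∀ m n : ℕ, Nat.Coprime m n → g j (m * n) = g j m * g j n) →
    ∀ a : Fin k → ℕ, Function.Injective a →
      (∃ j₀ : Fin k, ∀ q : ℕ, ∀ χ : DirichletCharacter ℂ q,
          Filter.Tendsto (fun X : ℝ =>
              ⨅ t : Set.Icc (-X) X,
                ∑ p ∈ Finset.range (⌊X⌋₊ + 1),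
                  if Nat.Prime p then
                    (1 - (g j₀ p * (starRingEnd ℂ) (χ (p : ZMod q)) *
                        (p : ℂ) ^ (-((t : ℝ) : ℂ) * Complex.I)).re) / (p : ℝ)
                  else 0)
            Filter.atTop Filter.atTop) →
      Filter.Tendsto (fun X : ℕ =>
          ‖∑ n ∈ Finset.range (X + 1), ∏ j, g j (n + a j)‖ / (X : ℝ))
        Filter.atTop (nhds 0)

/-- The `k`-fold divisor function. -/
def dk (k : ℕ) (n : ℕ) : ℕ := Nat.card {t : Fin k → ℕ | (∀ i, 0 < t i) ∧ ∏ i, t i = n}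

/-- The truncated product `λ̃_{y}(n) = ∏_{p | n, p ≤ y, p ∤ Δ} lam p`. -/
def tildeLam (lam : ℕ → ℝ) (Δ : ℤ) (y : ℝ) (n : ℕ) : ℝ :=
  ∏ p ∈ n.primeFactors.filter (fun p : ℕ => (p : ℝ) ≤ y ∧ ¬ ((p : ℤ) ∣ Δ)), lam p

/-- The twisted multiplicative function `g_j^{ν,u}`. -/
def gcorr {k : ℕ} (lam : Fin k → ℕ → ℝ) (Y : ℝ) (j : Fin k) (ν : ℕ) (u : ℝ) (n : ℕ) : ℂ :=
  (if ∀ i, lam i n ≠ 0 then (1 : ℂ) else 0) * ((Real.sign (lam j n) ^ ν : ℝ) : ℂ) *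
    Complex.exp (2 * Real.pi * Complex.I *
      (u * Real.log |lam j n| / Real.sqrt (cEK * Real.log (Real.log Y))))

/-- Square of the pretentious distance `𝔻(f, g; Y)²`. -/
def pretDist2 (f g : ℕ → ℂ) (Y : ℝ) : ℝ :=
  ∑ p ∈ Finset.range (⌊Y⌋₊ + 1),
    if Nat.Prime p then (1 - (f p * (starRingEnd ℂ) (g p)).re) / (p : ℝ) else 0

namespace VanishingThinAux

lemma muST_self (a : ℝ) : muST a a = 0 := by
  simp [muST, intervalIntegral.integral_same]

lemma log_sixteen_gt : (2.7182818286 : ℝ) < Real.log 16 := by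
  have h2 : (0.6931471803 : ℝ) < Real.log 2 := Real.log_two_gt_d9
  have h16 : (16 : ℝ) = 2 ^ (4 : ℕ) := by norm_num
  rw [h16, Real.log_pow]
  push_cast
  nlinarith

lemma exp_one_le_log_sixteen : Real.exp 1 ≤ Real.log 16 :=
  le_of_lt (lt_trans Real.exp_one_lt_d9 log_sixteen_gt)

lemma finite_aux (x : ℝ) (Q : ℕ → Prop) : {p : ℕ | p.Prime ∧ (p : ℝ) ≤ x ∧ Q p}.Finite := by
  apply Set.Finite.subset (Set.finite_Icc 0 ⌊x⌋₊)
  intro p hp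
  exact ⟨Nat.zero_le _, Nat.le_floor hp.2.1⟩

lemma g_hasDerivAt {t : ℝ} (ht : 0 < t) :
    HasDerivAt (fun u : ℝ => (Real.log u + 4) / Real.sqrt u)
      (-((Real.log t + 2) / (2 * (t * Real.sqrt t)))) t := by
  have hsp : 0 < Real.sqrt t := Real.sqrt_pos.mpr ht
  have hs : Real.sqrt t ≠ 0 := ne_of_gt hsp
  have h1 : HasDerivAt (fun u : ℝ => Real.log u + 4) t⁻¹ t :=
    (Real.hasDerivAt_log ht.ne').add_const 4
  have h2 : HasDerivAt (fun u : ℝ => Real.sqrt u) (1 / (2 * Real.sqrt t)) t :=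
    Real.hasDerivAt_sqrt ht.ne'
  have h3 := h1.div h2 hs
  refine h3.congr_deriv ?_
  set s := Real.sqrt t with hsdef
  have hss : s * s = t := Real.mul_self_sqrt ht.le
  rw [← hss]
  field_simp
  ring

lemma g_step {u : ℝ} (hu : Real.exp 1 ≤ u) :
    Real.log 2 / 8 * (Real.log u / (u * Real.sqrt u))
      ≤ (Real.log u + 4) / Real.sqrt u
        - (Real.log (u + Real.log 2) + 4) / Real.sqrt (u + Real.log 2) := by
  have hc0 : (0 : ℝ) < Real.log 2 := Real.log_pos (by norm_num)
  have hc1 : Real.log 2 < 1 := by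
    have := Real.log_two_lt_d9
    linarith
  have hu0 : (0 : ℝ) < u := lt_of_lt_of_le (Real.exp_pos 1) hu
  have hu1 : (1 : ℝ) ≤ Real.log u := by
    have := Real.log_le_log (Real.exp_pos 1) hu
    rwa [Real.log_exp] at this
  have hlt : u < u + Real.log 2 := by linarith
  obtain ⟨t, htmem, hteq⟩ := exists_hasDerivAt_eq_slope
    (fun u : ℝ => (Real.log u + 4) / Real.sqrt u)
    (fun t => -((Real.log t + 2) / (2 * (t * Real.sqrt t)))) hlt
    (fun x hx => (g_hasDerivAt (lt_of_lt_of_le hu0 hx.1)).continuousAt.continuousWithinAt)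
    (fun x hx => g_hasDerivAt (lt_trans hu0 hx.1))
  have ht0 : 0 < t := lt_trans hu0 htmem.1
  have htu : u < t := htmem.1
  have hu2 : (2:ℝ) ≤ u := le_trans (by nlinarith [Real.add_one_le_exp (1:ℝ)]) hu
  have htle : t ≤ 2 * u := by
    have := htmem.2
    linarith
  have hba : u + Real.log 2 - u = Real.log 2 := by ring
  rw [hba, eq_div_iff (ne_of_gt hc0)] at hteq
  have hglb : (Real.log u + 4) / Real.sqrt u
      - (Real.log (u + Real.log 2) + 4) / Real.sqrt (u + Real.log 2)
      = Real.log 2 * ((Real.log t + 2) / (2 * (t * Real.sqrt t))) := by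
    linear_combination hteq
  rw [hglb]
  have hlogt : Real.log u ≤ Real.log t + 2 := by
    have := Real.log_le_log hu0 (le_of_lt htu)
    linarith
  have hsqt2 : Real.sqrt 2 ≤ 2 := by
    nlinarith [Real.sq_sqrt (show (0:ℝ) ≤ 2 by norm_num), Real.sqrt_nonneg 2]
  have hsqt : Real.sqrt t ≤ 2 * Real.sqrt u := by
    have h1 : Real.sqrt t ≤ Real.sqrt (2 * u) := Real.sqrt_le_sqrt htle
    have h2 : Real.sqrt (2 * u) = Real.sqrt 2 * Real.sqrt u := Real.sqrt_mul (by norm_num) u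
    have h3 : Real.sqrt 2 * Real.sqrt u ≤ 2 * Real.sqrt u :=
      mul_le_mul_of_nonneg_right hsqt2 (Real.sqrt_nonneg u)
    linarith
  have hts : t * Real.sqrt t ≤ 4 * (u * Real.sqrt u) := by
    have h4 : t * Real.sqrt t ≤ (2 * u) * (2 * Real.sqrt u) :=
      mul_le_mul htle hsqt (Real.sqrt_nonneg t) (by linarith)
    linarith
  have hsu0 : 0 < u * Real.sqrt u := mul_pos hu0 (Real.sqrt_pos.mpr hu0)
  have hst0 : 0 < t * Real.sqrt t := mul_pos ht0 (Real.sqrt_pos.mpr ht0)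
  have hL : Real.log 2 / 8 * (Real.log u / (u * Real.sqrt u))
      = Real.log 2 * Real.log u / (8 * (u * Real.sqrt u)) := by ring
  have hR : Real.log 2 * ((Real.log t + 2) / (2 * (t * Real.sqrt t)))
      = Real.log 2 * (Real.log t + 2) / (2 * (t * Real.sqrt t)) := by ring
  rw [hL, hR, div_le_div_iff₀ (by positivity) (by positivity)]
  calc Real.log 2 * Real.log u * (2 * (t * Real.sqrt t))
      = 2 * Real.log 2 * (Real.log u * (t * Real.sqrt t)) := by ring
    _ ≤ 2 * Real.log 2 * ((Real.log t + 2) * (4 * (u * Real.sqrt u))) := by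
        apply mul_le_mul_of_nonneg_left _ (by positivity)
        exact mul_le_mul hlogt hts (le_of_lt hst0) (by linarith)
    _ = Real.log 2 * (Real.log t + 2) * (8 * (u * Real.sqrt u)) := by ring

lemma g_nonneg {v : ℝ} (hv : Real.exp 1 ≤ v) :
    0 ≤ (Real.log v + 4) / Real.sqrt v := by
  have hv0 : (0 : ℝ) < v := lt_of_lt_of_le (Real.exp_pos 1) hv
  have h1 : (1 : ℝ) ≤ Real.log v := by
    have := Real.log_le_log (Real.exp_pos 1) hv
    rwa [Real.log_exp] at this
  apply div_nonneg (by linarith) (Real.sqrt_nonneg v)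

lemma g_telescope {A : ℝ} (hA : Real.exp 1 ≤ A) (n : ℕ) :
    ∑ k ∈ Finset.range n, Real.log (A + k * Real.log 2) /
        ((A + k * Real.log 2) * Real.sqrt (A + k * Real.log 2))
      ≤ 8 / Real.log 2 * ((Real.log A + 4) / Real.sqrt A) := by
  have hc0 : (0 : ℝ) < Real.log 2 := Real.log_pos (by norm_num)
  have hAk : ∀ k : ℕ, Real.exp 1 ≤ A + k * Real.log 2 := by
    intro k
    have : (0:ℝ) ≤ k * Real.log 2 := by positivity
    linarith
  have main : ∀ n : ℕ, ∑ k ∈ Finset.range n, Real.log (A + k * Real.log 2) /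
        ((A + k * Real.log 2) * Real.sqrt (A + k * Real.log 2))
      ≤ 8 / Real.log 2 * ((Real.log A + 4) / Real.sqrt A
          - (Real.log (A + n * Real.log 2) + 4) / Real.sqrt (A + n * Real.log 2)) := by
    intro n
    induction n with
    | zero => simp
    | succ n ih =>
      rw [Finset.sum_range_succ]
      have hstep := g_step (hAk n)
      have harr : A + n * Real.log 2 + Real.log 2 = A + (n + 1 : ℕ) * Real.log 2 := by
        push_cast
        ring
      rw [harr] at hstep
      have h2 : Real.log (A + n * Real.log 2) /
          ((A + n * Real.log 2) * Real.sqrt (A + n * Real.log 2))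
          ≤ 8 / Real.log 2 * ((Real.log (A + n * Real.log 2) + 4) / Real.sqrt (A + n * Real.log 2)
            - (Real.log (A + (n + 1 : ℕ) * Real.log 2) + 4) / Real.sqrt (A + (n + 1 : ℕ) * Real.log 2)) := by
        have hmul := mul_le_mul_of_nonneg_left hstep (show (0:ℝ) ≤ 8 / Real.log 2 by positivity)
        rw [← mul_assoc] at hmul
        have hid : 8 / Real.log 2 * (Real.log 2 / 8) = 1 := by field_simp
        rw [hid, one_mul] at hmul
        exact hmul
      linarith
  have h := main n
  have hpos := g_nonneg (hAk n)
  have h8 : (0:ℝ) ≤ 8 / Real.log 2 := by positivity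
  nlinarith [mul_nonneg h8 hpos]

lemma primePi_le (x : ℝ) (hx : 16 ≤ x) : (primePi x : ℝ) ≤ 20 * x / Real.log x := by
  have hxpos : (0:ℝ) < x := by linarith
  set n := ⌊x⌋₊ with hn
  have hn16 : 16 ≤ n := Nat.le_floor (by exact_mod_cast hx)
  have hnx : (n : ℝ) ≤ x := Nat.floor_le hxpos.le
  have hn0 : (0:ℝ) < n := by
    have : (16:ℝ) ≤ n := by exact_mod_cast hn16
    linarith
  classical
  set P := (Finset.range (n+1)).filter (fun p : ℕ => p.Prime ∧ (p : ℝ) ≤ x) with hP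
  have hcard : (primePi x : ℝ) = (P.card : ℝ) := by
    have hset : {p : ℕ | p.Prime ∧ (p : ℝ) ≤ x} = (P : Set ℕ) := by
      ext p
      simp only [hP, Finset.coe_filter, Finset.mem_range, Set.mem_setOf_eq]
      constructor
      · rintro ⟨hp, hpx⟩
        exact ⟨Nat.lt_succ_of_le (Nat.le_floor hpx), hp, hpx⟩
      · rintro ⟨_, h⟩
        exact h
    rw [primePi, Nat.card_coe_set_eq, hset, Set.ncard_coe_finset]
  set s := Nat.sqrt n with hs
  have hn16' : (16:ℝ) ≤ (n:ℝ) := by exact_mod_cast hn16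
  have hs4 : 4 ≤ s := by
    have h44 : 4 * 4 ≤ n := by omega
    exact Nat.le_sqrt.mpr h44
  set F := P.filter (fun p => s < p) with hF
  have hsplitcard : P.card ≤ (s + 1) + F.card := by
    have hsub2 : P ⊆ Finset.range (s + 1) ∪ F := by
      intro p hp
      by_cases h : s < p
      · exact Finset.mem_union_right _ (Finset.mem_filter.mpr ⟨hp, h⟩)
      · exact Finset.mem_union_left _ (Finset.mem_range.mpr (by omega))
    calc P.card ≤ (Finset.range (s + 1) ∪ F).card := Finset.card_le_card hsub2
      _ ≤ (Finset.range (s + 1)).card + F.card := Finset.card_union_le _ _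
      _ = (s + 1) + F.card := by rw [Finset.card_range]
  -- product bound
  have hpow : (s + 1) ^ F.card ≤ 4 ^ n := by
    have h1 : (s + 1) ^ F.card ≤ ∏ p ∈ F, p := by
      apply Finset.pow_card_le_prod
      intro p hp
      rw [hF, Finset.mem_filter] at hp
      omega
    have h2 : ∏ p ∈ F, p ≤ primorial n := by
      rw [primorial]
      apply Finset.prod_le_prod_of_subset_of_one_le'
      · intro p hp
        rw [hF, Finset.mem_filter, hP, Finset.mem_filter] at hp
        rw [Finset.mem_filter]
        exact ⟨hp.1.1, hp.1.2.1⟩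
      · intro p hp _
        rw [Finset.mem_filter] at hp
        exact hp.2.one_lt.le
    exact le_trans h1 (le_trans h2 (primorial_le_4_pow n))
  have hlogn_pos : (0:ℝ) < Real.log n := by
    apply Real.log_pos
    have : (16:ℝ) ≤ n := by exact_mod_cast hn16
    linarith
  have hlogs_pos : (0:ℝ) < Real.log (s + 1 : ℕ) := by
    apply Real.log_pos
    have : (5:ℝ) ≤ ((s:ℕ) + 1 : ℕ) := by exact_mod_cast Nat.succ_le_succ hs4
    push_cast at this ⊢
    linarith
  -- N * log n ≤ 3 n
  have hNlog : (F.card : ℝ) * Real.log n ≤ 3 * n := by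
    have h1 : ((s+1:ℕ) : ℝ) ^ F.card ≤ (4:ℝ) ^ n := by
      exact_mod_cast hpow
    have h2 : (F.card : ℝ) * Real.log (s+1:ℕ) ≤ (n : ℝ) * Real.log 4 := by
      have := Real.log_le_log (by positivity) h1
      rwa [Real.log_pow, Real.log_pow] at this
    have h3 : Real.log n ≤ 2 * Real.log (s+1:ℕ) := by
      have hlt : (n:ℝ) ≤ ((s+1:ℕ):ℝ) ^ 2 := by
        have := Nat.lt_succ_sqrt' n
        exact_mod_cast this.le
      have := Real.log_le_log hn0 hlt
      rwa [Real.log_pow] at this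
      -- log n ≤ log ((s+1)^2) = 2 log (s+1)
    have h4 : Real.log 4 ≤ (7:ℝ)/5 := by
      have h2' : Real.log 4 = 2 * Real.log 2 := by
        rw [show (4:ℝ) = 2^(2:ℕ) by norm_num, Real.log_pow]
        push_cast
        ring
      have := Real.log_two_lt_d9
      rw [h2']
      linarith
    have hFc : (0:ℝ) ≤ (F.card : ℝ) := by positivity
    calc (F.card : ℝ) * Real.log n ≤ (F.card : ℝ) * (2 * Real.log (s+1:ℕ)) := by
          apply mul_le_mul_of_nonneg_left h3 hFc
      _ = 2 * ((F.card : ℝ) * Real.log (s+1:ℕ)) := by ring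
      _ ≤ 2 * ((n:ℝ) * Real.log 4) := by
          apply mul_le_mul_of_nonneg_left h2 (by norm_num)
      _ ≤ 2 * ((n:ℝ) * ((7:ℝ)/5)) := by
          apply mul_le_mul_of_nonneg_left _ (by norm_num)
          apply mul_le_mul_of_nonneg_left h4 hn0.le
      _ ≤ 3 * n := by nlinarith
  -- (s+1) * log n ≤ 4 n
  have hsqn : (0:ℝ) < Real.sqrt n := Real.sqrt_pos.mpr hn0
  have hslog : ((s:ℕ) + 1 : ℝ) * Real.log n ≤ 4 * n := by
    have hs_le : ((s:ℕ) : ℝ) ≤ Real.sqrt n := by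
      rw [show ((s:ℕ):ℝ) = Real.sqrt (((s:ℕ):ℝ)^2) by
        rw [Real.sqrt_sq (by positivity)]]
      apply Real.sqrt_le_sqrt
      have := Nat.sqrt_le' n
      exact_mod_cast this
    have hsq1 : (4:ℝ) ≤ Real.sqrt n := by
      rw [show (4:ℝ) = Real.sqrt 16 by
        rw [show (16:ℝ) = 4^2 by norm_num, Real.sqrt_sq (by norm_num)]]
      exact Real.sqrt_le_sqrt hn16'
    have hs1 : ((s:ℕ) + 1 : ℝ) ≤ 2 * Real.sqrt n := by linarith
    have hlogle : Real.log n ≤ 2 * Real.sqrt n := by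
      have h1 : Real.log (Real.sqrt n) = Real.log n / 2 := Real.log_sqrt hn0.le
      have h2 : Real.log (Real.sqrt n) ≤ Real.sqrt n - 1 := Real.log_le_sub_one_of_pos hsqn
      nlinarith
    have hsqsq : Real.sqrt n * Real.sqrt n = (n:ℝ) := Real.mul_self_sqrt hn0.le
    nlinarith [hlogn_pos, mul_le_mul hs1 hlogle hlogn_pos.le (by positivity)]
  -- combine
  have hPlog : (P.card : ℝ) * Real.log n ≤ 7 * n := by
    have hc : (P.card : ℝ) ≤ ((s:ℕ) + 1 : ℝ) + (F.card : ℝ) := by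
      exact_mod_cast hsplitcard
    nlinarith [hlogn_pos]
  have hlogx_pos : (0:ℝ) < Real.log x := by
    apply Real.log_pos
    linarith
  have hlogx_le : Real.log x ≤ 2 * Real.log n := by
    have h1 : x ≤ 2 * n := by
      have := Nat.lt_floor_add_one x
      have h16 : (16:ℝ) ≤ (n:ℝ) := by exact_mod_cast hn16
      push_cast at this
      linarith
    have h2 : Real.log x ≤ Real.log (2 * n) := Real.log_le_log hxpos h1
    have h3 : Real.log (2 * n) = Real.log 2 + Real.log n := Real.log_mul (by norm_num) (by positivity)
    have h4 : Real.log 2 ≤ Real.log n := Real.log_le_log (by norm_num) (by linarith [hn0, show (16:ℝ) ≤ n by exact_mod_cast hn16])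
    linarith
  rw [le_div_iff₀ hlogx_pos, hcard]
  calc (P.card : ℝ) * Real.log x ≤ (P.card : ℝ) * (2 * Real.log n) := by
        apply mul_le_mul_of_nonneg_left hlogx_le (by positivity)
    _ = 2 * ((P.card : ℝ) * Real.log n) := by ring
    _ ≤ 2 * (7 * n) := by linarith
    _ = 14 * (n:ℝ) := by ring
    _ ≤ 20 * x := by nlinarith

end VanishingThinAux

/-- The primes at which `lam` vanishes form a very thin set:
`∑_{p > y, lam p = 0} 1/p ≪ (log log y)² (log y)^{-1/2}`. -/
theorem vanishing_primes_thin (lam : ℕ → ℝ) (hadm : IsAdmissibleSeq lam)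
    (hST : EffST lam) :
    ∃ C > (0 : ℝ), ∀ y : ℝ, 16 ≤ y →
      Summable (fun p : ℕ => if p.Prime ∧ y < (p : ℝ) ∧ lam p = 0 then 1 / (p : ℝ) else 0) ∧
      (∑' p : ℕ, if p.Prime ∧ y < (p : ℝ) ∧ lam p = 0 then 1 / (p : ℝ) else 0)
        ≤ C * Real.log (Real.log y) ^ 2 * Real.log y ^ (-(1 : ℝ) / 2) := by
  classical
  obtain ⟨C, hC, hbd⟩ := hST
  have hc0 : (0 : ℝ) < Real.log 2 := Real.log_pos (by norm_num)
  have hZ : ∀ x : ℝ, 16 ≤ x →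
      (Nat.card {p : ℕ | p.Prime ∧ (p : ℝ) ≤ x ∧ lam p = 0} : ℝ)
        ≤ C * Real.log (Real.log x) * Real.log x ^ (-(1 : ℝ) / 2) * (primePi x : ℝ) := by
    intro x hx
    have hpi := Real.pi_pos
    have h := hbd (Real.pi / 2) (Real.pi / 2) (by linarith) le_rfl (by linarith) x hx
    rw [VanishingThinAux.muST_self, zero_mul, sub_zero] at h
    have hsets : {p : ℕ | p.Prime ∧ (p : ℝ) ≤ x ∧
          Real.arccos (lam p / 2) ∈ Set.Icc (Real.pi / 2) (Real.pi / 2)}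
        = {p : ℕ | p.Prime ∧ (p : ℝ) ≤ x ∧ lam p = 0} := by
      ext p
      simp only [Set.mem_setOf_eq, Set.Icc_self, Set.mem_singleton_iff]
      constructor
      · rintro ⟨hp, hpx, harc⟩
        refine ⟨hp, hpx, ?_⟩
        have hmem := hadm.2.2 p hp
        rw [Set.mem_Icc] at hmem
        have h1 : -1 ≤ lam p / 2 := by linarith [hmem.1]
        have h2 : lam p / 2 ≤ 1 := by linarith [hmem.2]
        have hcos := Real.cos_arccos h1 h2
        rw [harc, Real.cos_pi_div_two] at hcos
        linarith
      · rintro ⟨hp, hpx, h0⟩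
        refine ⟨hp, hpx, ?_⟩
        rw [h0]
        norm_num [Real.arccos_zero]
    rw [hsets] at h
    exact (le_abs_self _).trans h
  refine ⟨2000 * C / Real.log 2, div_pos (by linarith) hc0, fun y hy => ?_⟩
  have hy0 : (0 : ℝ) < y := by linarith
  have hLe : Real.exp 1 ≤ Real.log y :=
    le_trans VanishingThinAux.exp_one_le_log_sixteen (Real.log_le_log (by norm_num) hy)
  have hL0 : (0 : ℝ) < Real.log y := lt_of_lt_of_le (Real.exp_pos 1) hLe
  have hL1 : (1 : ℝ) ≤ Real.log (Real.log y) := by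
    have := Real.log_le_log (Real.exp_pos 1) hLe
    rwa [Real.log_exp] at this
  have hsqL : (0 : ℝ) < Real.sqrt (Real.log y) := Real.sqrt_pos.mpr hL0
  have hAe : Real.exp 1 ≤ Real.log y + Real.log 2 := by linarith
  have key : ∀ m : ℕ, ∑ p ∈ Finset.range m,
      (if p.Prime ∧ y < (p : ℝ) ∧ lam p = 0 then 1 / (p : ℝ) else 0)
      ≤ 2000 * C / Real.log 2 * Real.log (Real.log y) ^ 2 * Real.log y ^ (-(1 : ℝ) / 2) := by
    intro m
    rw [← Finset.sum_filter]
    set s' := (Finset.range m).filter (fun p : ℕ => p.Prime ∧ y < (p : ℝ) ∧ lam p = 0) with hs'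
    set kf : ℕ → ℕ := fun p => ⌊Real.logb 2 ((p : ℝ) / y)⌋₊ with hkf
    have hfacts : ∀ p ∈ s', (2 : ℝ) ^ (kf p) * y ≤ p ∧ (p : ℝ) ≤ (2 : ℝ) ^ (kf p + 1) * y := by
      intro p hp
      rw [hs', Finset.mem_filter] at hp
      obtain ⟨_, hprime, hyp, h0⟩ := hp
      have hratio : (1 : ℝ) ≤ (p : ℝ) / y := le_of_lt ((one_lt_div hy0).mpr hyp)
      have hratio0 : (0 : ℝ) < (p : ℝ) / y := by linarith
      have hlogb0 : (0 : ℝ) ≤ Real.logb 2 ((p : ℝ) / y) := Real.logb_nonneg (by norm_num) hratio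
      constructor
      · have h1 : ((kf p : ℕ) : ℝ) ≤ Real.logb 2 ((p : ℝ) / y) := Nat.floor_le hlogb0
        have h2 : (2 : ℝ) ^ ((kf p : ℕ) : ℝ) ≤ (2 : ℝ) ^ Real.logb 2 ((p : ℝ) / y) :=
          (Real.rpow_le_rpow_left_iff (by norm_num)).mpr h1
        rw [Real.rpow_logb (by norm_num) (by norm_num) hratio0, Real.rpow_natCast] at h2
        exact (le_div_iff₀ hy0).mp h2
      · have h1 : Real.logb 2 ((p : ℝ) / y) < ((kf p + 1 : ℕ) : ℝ) := by
          push_cast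
          exact Nat.lt_floor_add_one _
        have h2 : (2 : ℝ) ^ Real.logb 2 ((p : ℝ) / y) < (2 : ℝ) ^ ((kf p + 1 : ℕ) : ℝ) :=
          (Real.rpow_lt_rpow_left_iff (by norm_num)).mpr h1
        rw [Real.rpow_logb (by norm_num) (by norm_num) hratio0, Real.rpow_natCast] at h2
        exact le_of_lt ((div_lt_iff₀ hy0).mp h2)
    set K := s'.sup kf with hK
    have hmap : ∀ p ∈ s', kf p ∈ Finset.range (K + 1) := fun p hp =>
      Finset.mem_range.mpr (Nat.lt_succ_of_le (Finset.le_sup hp))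
    rw [← Finset.sum_fiberwise_of_maps_to hmap (fun p => 1 / (p : ℝ))]
    have inner_bound : ∀ k ∈ Finset.range (K + 1),
        ∑ p ∈ s'.filter (fun p => kf p = k), 1 / (p : ℝ)
          ≤ 40 * C * (Real.log (Real.log y + Real.log 2 + k * Real.log 2) /
              ((Real.log y + Real.log 2 + k * Real.log 2) *
                Real.sqrt (Real.log y + Real.log 2 + k * Real.log 2))) := by
      intro k _
      have hxk1 : (1 : ℝ) ≤ (2 : ℝ) ^ (k + 1) := one_le_pow₀ (by norm_num)
      have hxk16 : (16 : ℝ) ≤ (2 : ℝ) ^ (k + 1) * y := by nlinarith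
      have hxk0 : (0 : ℝ) < (2 : ℝ) ^ (k + 1) * y := by positivity
      have hak : Real.log ((2 : ℝ) ^ (k + 1) * y)
          = Real.log y + Real.log 2 + k * Real.log 2 := by
        rw [Real.log_mul (by positivity) hy0.ne', Real.log_pow]
        push_cast
        ring
      rw [← hak]
      have hlogxk : (0 : ℝ) < Real.log ((2 : ℝ) ^ (k + 1) * y) := by
        apply Real.log_pos
        linarith
      have hloglogxk : (0 : ℝ) < Real.log (Real.log ((2 : ℝ) ^ (k + 1) * y)) := by
        apply Real.log_pos
        have h1 : Real.log 16 ≤ Real.log ((2 : ℝ) ^ (k + 1) * y) :=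
          Real.log_le_log (by norm_num) hxk16
        have := VanishingThinAux.log_sixteen_gt
        linarith
      have hsqxk : (0 : ℝ) < Real.sqrt (Real.log ((2 : ℝ) ^ (k + 1) * y)) :=
        Real.sqrt_pos.mpr hlogxk
      have hcardle : ((s'.filter (fun p => kf p = k)).card : ℝ)
          ≤ (Nat.card {p : ℕ | p.Prime ∧ (p : ℝ) ≤ (2 : ℝ) ^ (k + 1) * y ∧ lam p = 0} : ℝ) := by
        have hsub : ↑(s'.filter (fun p => kf p = k))
            ⊆ {p : ℕ | p.Prime ∧ (p : ℝ) ≤ (2 : ℝ) ^ (k + 1) * y ∧ lam p = 0} := by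
          intro p hp
          rw [Finset.mem_coe, Finset.mem_filter] at hp
          obtain ⟨hps, hpk⟩ := hp
          have hfact := (hfacts p hps).2
          rw [hpk] at hfact
          have hps' := hps
          rw [hs', Finset.mem_filter] at hps'
          exact ⟨hps'.2.1, hfact, hps'.2.2.2⟩
        have h1 := Set.ncard_le_ncard hsub
          (VanishingThinAux.finite_aux ((2 : ℝ) ^ (k + 1) * y) _)
        rw [Set.ncard_coe_finset] at h1
        rw [Nat.card_coe_set_eq]
        exact_mod_cast h1
      have hsum1 : ∑ p ∈ s'.filter (fun p => kf p = k), 1 / (p : ℝ)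
          ≤ ((s'.filter (fun p => kf p = k)).card : ℝ) * (1 / ((2 : ℝ) ^ k * y)) := by
        have := Finset.sum_le_card_nsmul (s'.filter (fun p => kf p = k))
          (fun p => 1 / (p : ℝ)) (1 / ((2 : ℝ) ^ k * y)) ?_
        · simpa [nsmul_eq_mul] using this
        · intro p hp
          rw [Finset.mem_filter] at hp
          obtain ⟨hps, hpk⟩ := hp
          have hfact := (hfacts p hps).1
          rw [hpk] at hfact
          have h2k : (0 : ℝ) < (2 : ℝ) ^ k * y := by positivity
          exact one_div_le_one_div_of_le h2k hfact
      have hnn1 : (0 : ℝ) ≤ C * Real.log (Real.log ((2 : ℝ) ^ (k + 1) * y)) *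
          Real.log ((2 : ℝ) ^ (k + 1) * y) ^ (-(1 : ℝ) / 2) :=
        mul_nonneg (mul_nonneg hC.le hloglogxk.le) (Real.rpow_nonneg hlogxk.le _)
      calc ∑ p ∈ s'.filter (fun p => kf p = k), 1 / (p : ℝ)
          ≤ ((s'.filter (fun p => kf p = k)).card : ℝ) * (1 / ((2 : ℝ) ^ k * y)) := hsum1
        _ ≤ (Nat.card {p : ℕ | p.Prime ∧ (p : ℝ) ≤ (2 : ℝ) ^ (k + 1) * y ∧ lam p = 0} : ℝ)
              * (1 / ((2 : ℝ) ^ k * y)) := by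
            apply mul_le_mul_of_nonneg_right hcardle (by positivity)
        _ ≤ (C * Real.log (Real.log ((2 : ℝ) ^ (k + 1) * y)) *
              Real.log ((2 : ℝ) ^ (k + 1) * y) ^ (-(1 : ℝ) / 2) *
              (primePi ((2 : ℝ) ^ (k + 1) * y) : ℝ)) * (1 / ((2 : ℝ) ^ k * y)) := by
            apply mul_le_mul_of_nonneg_right (hZ _ hxk16) (by positivity)
        _ ≤ (C * Real.log (Real.log ((2 : ℝ) ^ (k + 1) * y)) *
              Real.log ((2 : ℝ) ^ (k + 1) * y) ^ (-(1 : ℝ) / 2) *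
              (20 * ((2 : ℝ) ^ (k + 1) * y) / Real.log ((2 : ℝ) ^ (k + 1) * y)))
              * (1 / ((2 : ℝ) ^ k * y)) := by
            apply mul_le_mul_of_nonneg_right _ (by positivity)
            exact mul_le_mul_of_nonneg_left (VanishingThinAux.primePi_le _ hxk16) hnn1
        _ = C * Real.log (Real.log ((2 : ℝ) ^ (k + 1) * y)) *
              Real.log ((2 : ℝ) ^ (k + 1) * y) ^ (-(1 : ℝ) / 2) *
              (20 * 2 / Real.log ((2 : ℝ) ^ (k + 1) * y)) := by
            have hne : ((2 : ℝ) ^ k * y) ≠ 0 := ne_of_gt (by positivity)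
            have hnum : 20 * ((2 : ℝ) ^ (k + 1) * y) = (20 * 2) * ((2 : ℝ) ^ k * y) := by
              rw [pow_succ]; ring
            have hc : (20 * ((2 : ℝ) ^ (k + 1) * y) / Real.log ((2 : ℝ) ^ (k + 1) * y))
                * (1 / ((2 : ℝ) ^ k * y)) = 20 * 2 / Real.log ((2 : ℝ) ^ (k + 1) * y) := by
              rw [div_mul_div_comm, mul_one, hnum,
                mul_div_mul_right _ _ hne]
            rw [mul_assoc, hc]
        _ = 40 * C * (Real.log (Real.log ((2 : ℝ) ^ (k + 1) * y)) /
              (Real.log ((2 : ℝ) ^ (k + 1) * y) * Real.sqrt (Real.log ((2 : ℝ) ^ (k + 1) * y)))) := by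
            rw [show (-(1 : ℝ) / 2) = -(1 / 2 : ℝ) by norm_num,
              Real.rpow_neg hlogxk.le, ← Real.sqrt_eq_rpow]
            field_simp [hlogxk.ne', hsqxk.ne']
            ring
    calc ∑ k ∈ Finset.range (K + 1), ∑ p ∈ s'.filter (fun p => kf p = k), 1 / (p : ℝ)
        ≤ ∑ k ∈ Finset.range (K + 1), 40 * C *
            (Real.log (Real.log y + Real.log 2 + k * Real.log 2) /
              ((Real.log y + Real.log 2 + k * Real.log 2) *
                Real.sqrt (Real.log y + Real.log 2 + k * Real.log 2))) :=
          Finset.sum_le_sum inner_bound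
      _ = 40 * C * ∑ k ∈ Finset.range (K + 1),
            Real.log ((Real.log y + Real.log 2) + k * Real.log 2) /
              (((Real.log y + Real.log 2) + k * Real.log 2) *
                Real.sqrt ((Real.log y + Real.log 2) + k * Real.log 2)) := by
          rw [Finset.mul_sum]
      _ ≤ 40 * C * (8 / Real.log 2 *
            ((Real.log (Real.log y + Real.log 2) + 4) / Real.sqrt (Real.log y + Real.log 2))) := by
          apply mul_le_mul_of_nonneg_left (VanishingThinAux.g_telescope hAe (K + 1))
            (by nlinarith)
      _ ≤ 2000 * C / Real.log 2 * Real.log (Real.log y) ^ 2 * Real.log y ^ (-(1 : ℝ) / 2) := by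
          have hA0 : (0 : ℝ) < Real.log y + Real.log 2 := by linarith
          have hA2L : Real.log y + Real.log 2 ≤ 2 * Real.log y := by
            have := Real.log_two_lt_d9
            nlinarith [Real.exp_pos 1, Real.add_one_le_exp (1 : ℝ)]
          have hlogA : Real.log (Real.log y + Real.log 2) ≤ 1 + Real.log (Real.log y) := by
            have h1 := Real.log_le_log hA0 hA2L
            rw [Real.log_mul (by norm_num) hL0.ne'] at h1
            have := Real.log_two_lt_d9
            linarith
          have hsA : Real.sqrt (Real.log y) ≤ Real.sqrt (Real.log y + Real.log 2) :=
            Real.sqrt_le_sqrt (by linarith)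
          have hq1 : (Real.log (Real.log y + Real.log 2) + 4) / Real.sqrt (Real.log y + Real.log 2)
              ≤ (Real.log (Real.log y) + 5) / Real.sqrt (Real.log y) :=
            div_le_div₀ (by linarith) (by linarith) hsqL hsA
          have hq2 : (Real.log (Real.log y) + 5) / Real.sqrt (Real.log y)
              ≤ 6 * Real.log (Real.log y) ^ 2 / Real.sqrt (Real.log y) := by
            have hnum : Real.log (Real.log y) + 5 ≤ 6 * Real.log (Real.log y) ^ 2 := by
              nlinarith [sq_nonneg (Real.log (Real.log y) - 1)]
            exact div_le_div₀ (by positivity) hnum hsqL le_rfl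
          have hrwL : Real.log y ^ (-(1 : ℝ) / 2) = 1 / Real.sqrt (Real.log y) := by
            rw [show (-(1 : ℝ) / 2) = -(1 / 2 : ℝ) by norm_num, Real.rpow_neg hL0.le,
              ← Real.sqrt_eq_rpow, one_div]
          rw [hrwL]
          have hstep : 40 * C * (8 / Real.log 2 *
              ((Real.log (Real.log y + Real.log 2) + 4) / Real.sqrt (Real.log y + Real.log 2)))
              ≤ 40 * C * (8 / Real.log 2 *
                (6 * Real.log (Real.log y) ^ 2 / Real.sqrt (Real.log y))) := by
            apply mul_le_mul_of_nonneg_left _ (by nlinarith)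
            apply mul_le_mul_of_nonneg_left (le_trans hq1 hq2) (by positivity)
          have heq : 40 * C * (8 / Real.log 2 *
              (6 * Real.log (Real.log y) ^ 2 / Real.sqrt (Real.log y)))
              = 1920 * (C / Real.log 2 * Real.log (Real.log y) ^ 2 * (1 / Real.sqrt (Real.log y))) := by
            ring
          have hQ : (0 : ℝ) ≤ C / Real.log 2 * Real.log (Real.log y) ^ 2 * (1 / Real.sqrt (Real.log y)) := by
            positivity
          have hfin : (1920 : ℝ) * (C / Real.log 2 * Real.log (Real.log y) ^ 2 * (1 / Real.sqrt (Real.log y)))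
              ≤ 2000 * (C / Real.log 2 * Real.log (Real.log y) ^ 2 * (1 / Real.sqrt (Real.log y))) :=
            mul_le_mul_of_nonneg_right (by norm_num) hQ
          calc 40 * C * (8 / Real.log 2 *
              ((Real.log (Real.log y + Real.log 2) + 4) / Real.sqrt (Real.log y + Real.log 2)))
              ≤ 1920 * (C / Real.log 2 * Real.log (Real.log y) ^ 2 * (1 / Real.sqrt (Real.log y))) := by
                rw [← heq]; exact hstep
            _ ≤ 2000 * (C / Real.log 2 * Real.log (Real.log y) ^ 2 * (1 / Real.sqrt (Real.log y))) := hfin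
            _ = 2000 * C / Real.log 2 * Real.log (Real.log y) ^ 2 * (1 / Real.sqrt (Real.log y)) := by
                ring
  have hfnonneg : ∀ p : ℕ, 0 ≤ (if p.Prime ∧ y < (p : ℝ) ∧ lam p = 0 then 1 / (p : ℝ) else 0) := by
    intro p
    split
    · positivity
    · exact le_refl 0
  exact ⟨summable_of_sum_range_le hfnonneg key,
    Summable.tsum_le_of_sum_range_le (summable_of_sum_range_le hfnonneg key) key⟩

end
end

section
/- Let S be a set of primes with ∑_{p ∈ S} 1/p < ∞, let k ≥ 1, and let g: ℕ → ℝ be a multiplicative function such that g(p) = 0 for every prime p ∉ S and |g(n)| ≤ d_k(n) for all n ≥ 1. Then there is a constant C > 0 (depending only on k and S) such that for all 10 ≤ y ≤ z ≤ x, ∑_{z < n ≤ x} |g(n)|/n ≤ C·(exp(−(log z)/(log y)) + ∑_{p prime, y < p ≤ x, p ∈ S} 1/p + 1/y). -/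
open scoped BigOperators
open Filter MeasureTheory

attribute [local instance] Classical.propDecidable

noncomputable section

namespace ThinTail

lemma mult_prod_pow (F : ℕ → ℝ) (h1 : F 1 = 1)
    (hm : ∀ m n : ℕ, Nat.Coprime m n → F (m * n) = F m * F n)
    (Q : Finset ℕ) (hQ : ∀ p ∈ Q, Nat.Prime p) (e : ℕ → ℕ) :
    F (∏ p ∈ Q, p ^ e p) = ∏ p ∈ Q, F (p ^ e p) := by
  induction Q using Finset.induction_on with
  | empty => simpa using h1
  | insert a s ha ih =>
    have hc : Nat.Coprime (a ^ e a) (∏ q ∈ s, q ^ e q) :=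
      Nat.Coprime.pow_left _ (Nat.Coprime.prod_right fun q hq =>
        Nat.Coprime.pow_right _
          ((Nat.coprime_primes (hQ a (Finset.mem_insert_self a s))
            (hQ q (Finset.mem_insert_of_mem hq))).mpr (by rintro rfl; exact ha hq)))
    rw [Finset.prod_insert ha, Finset.prod_insert ha, hm _ _ hc,
      ih (fun p hp => hQ p (Finset.mem_insert_of_mem hp))]

lemma sum_le_prod_local (F : ℕ → ℝ) (h0 : ∀ n, 0 ≤ F n) (h1 : F 1 = 1)
    (hm : ∀ m n : ℕ, Nat.Coprime m n → F (m * n) = F m * F n)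
    (Q : Finset ℕ) (hQ : ∀ p ∈ Q, Nat.Prime p) (σ : ℕ → Finset ℕ) (A : Finset ℕ)
    (hA : ∀ n ∈ A, n ≠ 0 ∧ n.primeFactors ⊆ Q ∧ ∀ p ∈ Q, n.factorization p ∈ σ p) :
    ∑ n ∈ A, F n ≤ ∏ p ∈ Q, ∑ a ∈ σ p, F (p ^ a) := by
  classical
  have hfac : ∀ n ∈ A, n = ∏ p ∈ Q, p ^ n.factorization p := by
    intro n hn
    obtain ⟨hn0, hsub, -⟩ := hA n hn
    have h2 : ∏ p ∈ n.primeFactors, p ^ n.factorization p = n := by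
      conv_rhs => rw [← Nat.factorization_prod_pow_eq_self hn0]
      exact (Nat.prod_factorization_eq_prod_primeFactors fun p k => p ^ k).symm
    rw [← Finset.prod_subset hsub (fun p _ hp => ?_), h2]
    have : n.factorization p = 0 := by
      rwa [← Nat.support_factorization, Finsupp.notMem_support_iff] at hp
    simp [this]
  have hFn : ∀ n ∈ A, F n = ∏ p ∈ Q.attach, F ((p : ℕ) ^ n.factorization p) := by
    intro n hn
    rw [Finset.prod_attach Q (fun p => F (p ^ n.factorization p))]
    conv_lhs => rw [hfac n hn]
    exact mult_prod_pow F h1 hm Q hQ _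
  rw [Finset.sum_congr rfl hFn, Finset.prod_sum]
  set φ : ℕ → (∀ a ∈ Q, ℕ) := fun n => fun p _ => n.factorization p with hφ
  have hinj : ∀ m ∈ A, ∀ n ∈ A, φ m = φ n → m = n := by
    intro m hm' n hn' he
    rw [hfac m hm', hfac n hn']
    refine Finset.prod_congr rfl fun p hp => ?_
    have := congrFun (congrFun he p) hp
    simp only [φ] at this
    rw [this]
  have himg : A.image φ ⊆ Q.pi σ := by
    intro π hπ
    obtain ⟨n, hn, rfl⟩ := Finset.mem_image.mp hπ
    exact Finset.mem_pi.mpr fun p hp => (hA n hn).2.2 p hp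
  calc ∑ n ∈ A, ∏ p ∈ Q.attach, F ((p : ℕ) ^ n.factorization p)
      = ∑ π ∈ A.image φ, ∏ p ∈ Q.attach, F ((p : ℕ) ^ π p p.2) := by
        rw [Finset.sum_image hinj]
    _ ≤ ∑ π ∈ Q.pi σ, ∏ p ∈ Q.attach, F ((p : ℕ) ^ π p p.2) := by
        refine Finset.sum_le_sum_of_subset_of_nonneg himg fun π _ _ => ?_
        exact Finset.prod_nonneg fun p _ => h0 _

def tau : ℝ := (2 : ℝ) ^ (-(1/2) : ℝ)

lemma tau_lt_one : tau < 1 :=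
  Real.rpow_lt_one_of_one_lt_of_neg one_lt_two (by norm_num)

lemma half_le_tau : (1/2 : ℝ) ≤ tau := by
  have := Real.rpow_le_rpow_of_exponent_le (x := 2) one_le_two (by norm_num : (-1 : ℝ) ≤ -(1/2))
  rwa [Real.rpow_neg_one, show ((2:ℝ))⁻¹ = 1/2 by norm_num] at this

lemma tau_nonneg : 0 ≤ tau := Real.rpow_nonneg (by norm_num) _

lemma exists_B (k : ℕ) : ∃ B : ℝ, 1 ≤ B ∧
    ∀ t : ℝ, 0 ≤ t → t ≤ tau → ∀ s : Finset ℕ,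
      ∑ a ∈ s, ((a : ℝ) + 1) ^ k * t ^ a ≤ B := by
  have hsum : Summable (fun a : ℕ => ((a : ℝ) + 1) ^ k * tau ^ a) := by
    have h1 : Summable (fun n : ℕ => (n : ℝ) ^ k * tau ^ n) :=
      summable_pow_mul_geometric_of_norm_lt_one k
        (by rw [Real.norm_eq_abs, abs_of_nonneg tau_nonneg]; exact tau_lt_one)
    have h2 := (summable_nat_add_iff 1).mpr h1
    have h3 : (fun a : ℕ => ((a + 1 : ℕ) : ℝ) ^ k * tau ^ (a + 1))
        = fun a : ℕ => tau * (((a : ℝ) + 1) ^ k * tau ^ a) := by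
      funext a; push_cast; ring
    rw [h3] at h2
    have htau : tau ≠ 0 := by
      have := half_le_tau; nlinarith
    exact (summable_mul_left_iff htau).mp h2
  refine ⟨∑' a : ℕ, ((a : ℝ) + 1) ^ k * tau ^ a, ?_, ?_⟩
  · have h0 := Summable.le_tsum hsum 0 fun a _ =>
      mul_nonneg (by positivity) (pow_nonneg tau_nonneg a)
    simpa using h0
  · intro t ht htt s
    calc ∑ a ∈ s, ((a : ℝ) + 1) ^ k * t ^ a
        ≤ ∑ a ∈ s, ((a : ℝ) + 1) ^ k * tau ^ a := by
          refine Finset.sum_le_sum fun a _ => ?_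
          have : t ^ a ≤ tau ^ a := pow_le_pow_left₀ ht htt a
          have h1 : (0:ℝ) ≤ ((a : ℝ) + 1) ^ k := by positivity
          nlinarith [this, h1]
      _ ≤ ∑' a : ℕ, ((a : ℝ) + 1) ^ k * tau ^ a :=
          Summable.sum_le_tsum s (fun a _ => mul_nonneg (by positivity) (pow_nonneg tau_nonneg a)) hsum

lemma icc_bound (k j M : ℕ) (B t : ℝ) (ht : 0 ≤ t) (httau : t ≤ tau)
    (hB : ∀ t' : ℝ, 0 ≤ t' → t' ≤ tau → ∀ s : Finset ℕ,
      ∑ a ∈ s, ((a : ℝ) + 1) ^ k * t' ^ a ≤ B) :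
    ∑ a ∈ Finset.Icc j M, ((a : ℝ) + 1) ^ k * t ^ a
      ≤ ((j : ℝ) + 1) ^ k * B * t ^ j := by
  classical
  have key : ∀ a ∈ Finset.Icc j M, ((a : ℝ) + 1) ^ k * t ^ a
      ≤ ((j : ℝ) + 1) ^ k * t ^ j * ((((a - j : ℕ) : ℝ) + 1) ^ k * t ^ (a - j)) := by
    intro a ha
    have hja : j ≤ a := (Finset.mem_Icc.mp ha).1
    have hsplit : a = j + (a - j) := by omega
    have hpow : t ^ a = t ^ j * t ^ (a - j) := by
      conv_lhs => rw [hsplit]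
      exact pow_add t j (a - j)
    have hnat : (a : ℝ) + 1 ≤ ((j : ℝ) + 1) * (((a - j : ℕ) : ℝ) + 1) := by
      have : a + 1 ≤ (j + 1) * ((a - j) + 1) := by
        have : (j+1) * ((a-j)+1) = j*(a-j) + j + (a-j) + 1 := by ring
        omega
      calc (a : ℝ) + 1 = ((a + 1 : ℕ) : ℝ) := by push_cast; ring
        _ ≤ (((j + 1) * ((a - j) + 1) : ℕ) : ℝ) := by exact_mod_cast this
        _ = ((j : ℝ) + 1) * (((a - j : ℕ) : ℝ) + 1) := by push_cast; ring
    have h1 : ((a : ℝ) + 1) ^ k ≤ (((j : ℝ) + 1) * (((a - j : ℕ) : ℝ) + 1)) ^ k :=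
      pow_le_pow_left₀ (by positivity) hnat k
    calc ((a : ℝ) + 1) ^ k * t ^ a
        ≤ (((j : ℝ) + 1) * (((a - j : ℕ) : ℝ) + 1)) ^ k * t ^ a := by
          have : (0:ℝ) ≤ t ^ a := by positivity
          nlinarith
      _ = ((j : ℝ) + 1) ^ k * t ^ j * ((((a - j : ℕ) : ℝ) + 1) ^ k * t ^ (a - j)) := by
          rw [hpow, mul_pow]; ring
  calc ∑ a ∈ Finset.Icc j M, ((a : ℝ) + 1) ^ k * t ^ a
      ≤ ∑ a ∈ Finset.Icc j M, ((j : ℝ) + 1) ^ k * t ^ j *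
          ((((a - j : ℕ) : ℝ) + 1) ^ k * t ^ (a - j)) := Finset.sum_le_sum key
    _ = ((j : ℝ) + 1) ^ k * t ^ j * ∑ a ∈ Finset.Icc j M,
          ((((a - j : ℕ) : ℝ) + 1) ^ k * t ^ (a - j)) := by rw [Finset.mul_sum]
    _ ≤ ((j : ℝ) + 1) ^ k * t ^ j * B := by
        have hinj : ∀ x ∈ Finset.Icc j M, ∀ y ∈ Finset.Icc j M, x - j = y - j → x = y := by
          intro x hx y hy h
          have := (Finset.mem_Icc.mp hx).1; have := (Finset.mem_Icc.mp hy).1; omega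
        have : ∑ a ∈ Finset.Icc j M, ((((a - j : ℕ) : ℝ) + 1) ^ k * t ^ (a - j))
            = ∑ b ∈ (Finset.Icc j M).image (· - j), (((b : ℝ) + 1) ^ k * t ^ b) :=
          (Finset.sum_image (f := fun b : ℕ => ((b : ℝ) + 1) ^ k * t ^ b) hinj).symm
        rw [this]
        have hb := hB t ht httau ((Finset.Icc j M).image (· - j))
        have h2 : (0:ℝ) ≤ ((j : ℝ) + 1) ^ k * t ^ j := by positivity
        exact mul_le_mul_of_nonneg_left hb h2
    _ = ((j : ℝ) + 1) ^ k * B * t ^ j := by ring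

lemma dk_prime_pow_le (k p a : ℕ) (hp : p.Prime) : dk k (p ^ a) ≤ (a + 1) ^ k := by
  classical
  have key : ∀ t : {t : Fin k → ℕ | (∀ i, 0 < t i) ∧ ∏ i, t i = p ^ a},
      ∀ i, (t.1 i).factorization p ≤ a ∧ t.1 i = p ^ ((t.1 i).factorization p) := by
    rintro ⟨t, ht0, htp⟩ i
    have hdvd : t i ∣ p ^ a := htp ▸ Finset.dvd_prod_of_mem t (Finset.mem_univ i)
    obtain ⟨b, hb, hbe⟩ := (Nat.dvd_prime_pow hp).mp hdvd
    have hfac : (p ^ b).factorization p = b := by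
      rw [Nat.Prime.factorization_pow hp, Finsupp.single_eq_same]
    constructor
    · simp only [hbe, hfac]; exact hb
    · simp only [hbe, hfac]
  let f : {t : Fin k → ℕ | (∀ i, 0 < t i) ∧ ∏ i, t i = p ^ a} → (Fin k → Fin (a + 1)) :=
    fun t i => ⟨(t.1 i).factorization p, Nat.lt_succ_of_le ((key t i).1)⟩
  have hinj : Function.Injective f := by
    intro t u he
    ext i : 2
    have ht := (key t i).2
    have hu := (key u i).2
    have : (t.1 i).factorization p = (u.1 i).factorization p := by
      have := congrFun he i
      simpa [f, Fin.ext_iff] using this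
    rw [ht, hu, this]
  calc dk k (p ^ a) ≤ Nat.card (Fin k → Fin (a + 1)) := Nat.card_le_card_of_injective f hinj
    _ = (a + 1) ^ k := by simp [Nat.card_eq_fintype_card]

lemma sum_Ioc_inv_sq_le (a : ℕ) (ha : 1 ≤ a) (b : ℕ) :
    ∑ m ∈ Finset.Ioc a b, 1 / ((m : ℝ)) ^ 2 ≤ 1 / (a : ℝ) := by
  rcases le_or_gt a b with hab | hab
  · have key : ∀ b', a ≤ b' → ∑ m ∈ Finset.Ioc a b', 1 / ((m : ℝ)) ^ 2 ≤ 1 / (a : ℝ) - 1 / (b' : ℝ) := by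
      intro b' hb'
      induction b', hb' using Nat.le_induction with
      | base => simp
      | succ b' hb' ih =>
        rw [Finset.sum_Ioc_succ_top hb']
        have h1 : (0:ℝ) < b' := by exact_mod_cast lt_of_lt_of_le (by omega) hb'
        have h2 : (0:ℝ) < (b' : ℝ) + 1 := by linarith
        have h3 : 1 / ((b' : ℝ) + 1) ^ 2 ≤ 1 / (b' : ℝ) - 1 / ((b' : ℝ) + 1) := by
          rw [div_sub_div _ _ (ne_of_gt h1) (ne_of_gt h2)]
          rw [div_le_div_iff₀ (by positivity) (by positivity)]
          ring_nf
          nlinarith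
        push_cast
        linarith [ih]
    have h := key b hab
    have : (0:ℝ) < b := by exact_mod_cast lt_of_lt_of_le (by omega) hab
    have : 0 ≤ 1 / (b:ℝ) := by positivity
    linarith
  · rw [Finset.Ioc_eq_empty (by omega)]
    simp only [Finset.sum_empty]
    positivity

lemma prod_le_exp_sum (Q : Finset ℕ) (f w : ℕ → ℝ) (hf : ∀ q ∈ Q, 0 ≤ f q)
    (hfw : ∀ q ∈ Q, f q ≤ 1 + w q) :
    ∏ q ∈ Q, f q ≤ Real.exp (∑ q ∈ Q, w q) := by
  rw [Real.exp_sum]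
  refine Finset.prod_le_prod hf fun q hq => ?_
  calc f q ≤ 1 + w q := hfw q hq
    _ = w q + 1 := by ring
    _ ≤ Real.exp (w q) := Real.add_one_le_exp _

lemma covering (f : ℕ → ℝ) (A P : Finset ℕ) (h0 : ∀ n ∈ A, 0 ≤ f n)
    (hcov : ∀ n ∈ A, ∃ p ∈ P, p ∣ n) :
    ∑ n ∈ A, f n ≤ ∑ p ∈ P, ∑ n ∈ A.filter (p ∣ ·), f n := by
  classical
  have h : ∀ p, ∑ n ∈ A.filter (p ∣ ·), f n = ∑ n ∈ A, if p ∣ n then f n else 0 :=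
    fun p => Finset.sum_filter _ _
  simp_rw [h]
  rw [Finset.sum_comm]
  refine Finset.sum_le_sum fun n hn => ?_
  obtain ⟨p, hp, hpn⟩ := hcov n hn
  calc f n = if p ∣ n then f n else 0 := by rw [if_pos hpn]
    _ ≤ ∑ p' ∈ P, if p' ∣ n then f n else 0 := by
        refine Finset.single_le_sum (f := fun p' => if p' ∣ n then f n else 0) (fun p' _ => ?_) hp
        split
        · exact h0 n hn
        · exact le_refl 0

end ThinTail

set_option maxHeartbeats 2000000 in
/-- Tail bound for the harmonic sum of a multiplicative function supported on
a thin set of primes and dominated by the `k`-fold divisor function. -/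
theorem thin_support_tail (S : Set ℕ) (hSp : ∀ p ∈ S, Nat.Prime p)
    (hS : Summable fun p : ℕ => if p ∈ S then 1 / (p : ℝ) else 0)
    (k : ℕ) (hk : 1 ≤ k) (g : ℕ → ℝ)
    (hg1 : g 1 = 1) (hgm : ∀ m n : ℕ, Nat.Coprime m n → g (m * n) = g m * g n)
    (hgS : ∀ p : ℕ, p.Prime → p ∉ S → g p = 0)
    (hgd : ∀ n : ℕ, 1 ≤ n → |g n| ≤ (dk k n : ℝ)) :
    ∃ C > (0 : ℝ), ∀ y z x : ℝ, 10 ≤ y → y ≤ z → z ≤ x →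
      (∑ n ∈ Finset.range (⌊x⌋₊ + 1), if z < (n : ℝ) then |g n| / (n : ℝ) else 0)
        ≤ C * (Real.exp (-(Real.log z / Real.log y)) +
          (∑ p ∈ Finset.range (⌊x⌋₊ + 1),
            if p.Prime ∧ y < (p : ℝ) ∧ p ∈ S then 1 / (p : ℝ) else 0) + 1 / y) := by
  classical
  obtain ⟨B, hB1, hB⟩ := ThinTail.exists_B k
  have hB0 : (0:ℝ) < B := lt_of_lt_of_le one_pos hB1
  set e1 : ℝ := Real.exp 1 with he1
  have he1_ge : (1:ℝ) ≤ e1 := Real.one_le_exp_iff.mpr zero_le_one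
  have he1_pos : (0:ℝ) < e1 := lt_of_lt_of_le one_pos he1_ge
  set C0 : ℝ := 2^k * B with hC0def
  set C2 : ℝ := 3^k * B with hC2def
  have hC0 : (0:ℝ) < C0 := by positivity
  have hC2 : (0:ℝ) < C2 := by positivity
  set SS : ℝ := ∑' p : ℕ, if p ∈ S then 1/(p:ℝ) else 0 with hSSdef
  have hSS0 : 0 ≤ SS := tsum_nonneg (fun p => by split <;> positivity)
  have hZsummable : Summable (fun m : ℕ => 1/((m:ℝ))^2) :=
    Real.summable_one_div_nat_pow.mpr one_lt_two
  set Z : ℝ := ∑' m : ℕ, 1/((m:ℝ))^2 with hZdef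
  have hZ0 : 0 ≤ Z := tsum_nonneg (fun m => by positivity)
  set W : ℝ := C0 * e1 * SS + C2 * e1^2 * Z with hWdef
  set T : ℝ := Real.exp W with hTdef
  have hT0 : (0:ℝ) < T := Real.exp_pos W
  have hT1 : (1:ℝ) ≤ T := by
    rw [hTdef]
    rw [show (1:ℝ) = Real.exp 0 from (Real.exp_zero).symm]
    apply Real.exp_le_exp.mpr
    have : 0 ≤ C0 * e1 * SS := by positivity
    have : 0 ≤ C2 * e1^2 * Z := by positivity
    rw [hWdef]; linarith
  refine ⟨T * (1 + C0 + 2*C2), by positivity, ?_⟩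
  intro y z x hy hyz hzx
  -- basic numeric facts
  have hy0 : (0:ℝ) < y := by linarith
  have hz10 : (10:ℝ) ≤ z := le_trans hy hyz
  have hz0 : (0:ℝ) < z := by linarith
  have hx10 : (10:ℝ) ≤ x := le_trans hz10 hzx
  set N : ℕ := ⌊x⌋₊ with hNdef
  have hN10 : 10 ≤ N := Nat.le_floor (by exact_mod_cast hx10)
  have hlogy2 : (2:ℝ) ≤ Real.log y := by
    have h10 : (2:ℝ) ≤ Real.log 10 := by
      rw [Real.le_log_iff_exp_le (by norm_num : (0:ℝ) < 10)]
      have h := Real.exp_one_lt_d9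
      have : Real.exp 2 = Real.exp 1 * Real.exp 1 := by
        rw [← Real.exp_add]; norm_num
      rw [this]; nlinarith [Real.exp_pos 1]
    calc (2:ℝ) ≤ Real.log 10 := h10
      _ ≤ Real.log y := Real.log_le_log (by norm_num) hy
  have hlogy0 : (0:ℝ) < Real.log y := by linarith
  set ss : ℝ := 1 - 1/Real.log y with hssdef
  have hss_half : (1/2 : ℝ) ≤ ss := by
    have : 1/Real.log y ≤ 1/2 := by
      rw [div_le_div_iff₀ hlogy0 (by norm_num)]; linarith
    rw [hssdef]; linarith
  -- the multiplicative functions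
  set F : ℕ → ℝ := fun n => |g n| / (n:ℝ) with hFdef
  set Fw : ℕ → ℝ := fun n => |g n| * (n:ℝ) ^ (-ss) with hFwdef
  have hF0 : ∀ n, 0 ≤ F n := fun n => div_nonneg (abs_nonneg _) (Nat.cast_nonneg n)
  have hFw0 : ∀ n, 0 ≤ Fw n := fun n =>
    mul_nonneg (abs_nonneg _) (Real.rpow_nonneg (Nat.cast_nonneg n) _)
  have hF1 : F 1 = 1 := by simp [hFdef, hg1]
  have hFw1 : Fw 1 = 1 := by simp [hFwdef, hg1]
  have hFm : ∀ m n : ℕ, Nat.Coprime m n → F (m*n) = F m * F n := by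
    intro m n hc
    simp only [hFdef]
    rw [hgm m n hc, abs_mul, Nat.cast_mul, mul_div_mul_comm]
  have hFwm : ∀ m n : ℕ, Nat.Coprime m n → Fw (m*n) = Fw m * Fw n := by
    intro m n hc
    simp only [hFwdef]
    rw [hgm m n hc, abs_mul, Nat.cast_mul,
      Real.mul_rpow (Nat.cast_nonneg m) (Nat.cast_nonneg n)]
    ring
  -- bound at prime powers
  have hpk : ∀ p a : ℕ, p.Prime → |g (p^a)| ≤ ((a:ℝ)+1)^k := by
    intro p a hp
    have h1 : 1 ≤ p ^ a := Nat.one_le_pow a p hp.pos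
    calc |g (p^a)| ≤ (dk k (p^a) : ℝ) := hgd _ h1
      _ ≤ (((a+1)^k : ℕ) : ℝ) := by
          exact_mod_cast ThinTail.dk_prime_pow_le k p a hp
      _ = ((a:ℝ)+1)^k := by push_cast; ring
  -- local sums over Icc j N
  have localIcc : ∀ q : ℕ, q.Prime → ∀ t : ℝ, 0 ≤ t → t ≤ ThinTail.tau → ∀ j : ℕ,
      ∑ a ∈ Finset.Icc j N, |g (q^a)| * t^a ≤ ((j:ℝ)+1)^k * B * t^j := by
    intro q hq t ht htt j
    calc ∑ a ∈ Finset.Icc j N, |g (q^a)| * t^a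
        ≤ ∑ a ∈ Finset.Icc j N, ((a:ℝ)+1)^k * t^a := by
          refine Finset.sum_le_sum fun a _ => ?_
          exact mul_le_mul_of_nonneg_right (hpk q a hq) (pow_nonneg ht a)
      _ ≤ ((j:ℝ)+1)^k * B * t^j := ThinTail.icc_bound k j N B t ht htt hB
  -- full local sums (from a = 0)
  have localFull_S : ∀ q : ℕ, q.Prime → ∀ t : ℝ, 0 ≤ t → t ≤ ThinTail.tau →
      ∑ a ∈ Finset.Icc 0 N, |g (q^a)| * t^a ≤ 1 + C0 * t := by
    intro q hq t ht htt
    have hins : Finset.Icc 0 N = insert 0 (Finset.Icc 1 N) := by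
      ext m; simp only [Finset.mem_Icc, Finset.mem_insert]; omega
    rw [hins, Finset.sum_insert (by simp)]
    have h0 : |g (q^0)| * t^0 = 1 := by simp [hg1]
    rw [h0]
    have := localIcc q hq t ht htt 1
    have heq : ((1:ℕ):ℝ) + 1 = 2 := by norm_num
    rw [heq] at this
    simp only [pow_one] at this
    rw [hC0def]
    linarith
  have localFull_nS : ∀ q : ℕ, q.Prime → q ∉ S → ∀ t : ℝ, 0 ≤ t → t ≤ ThinTail.tau →
      ∑ a ∈ Finset.Icc 0 N, |g (q^a)| * t^a ≤ 1 + C2 * t^2 := by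
    intro q hq hqS t ht htt
    have hins : Finset.Icc 0 N = insert 0 (insert 1 (Finset.Icc 2 N)) := by
      ext m; simp only [Finset.mem_Icc, Finset.mem_insert]; omega
    rw [hins, Finset.sum_insert (by simp), Finset.sum_insert (by simp)]
    have h0 : |g (q^0)| * t^0 = 1 := by simp [hg1]
    have h1 : |g (q^1)| * t^1 = 0 := by
      rw [pow_one, hgS q hq hqS]; simp
    rw [h0, h1]
    have := localIcc q hq t ht htt 2
    have heq : ((2:ℕ):ℝ) + 1 = 3 := by norm_num
    rw [heq] at this
    rw [hC2def]
    linarith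
  -- the weight function for Euler products
  set w : ℕ → ℝ := fun q =>
    (if q ∈ S then C0 * e1 * (1/(q:ℝ)) else 0) + C2 * e1^2 * (1/((q:ℝ))^2) with hwdef
  have hw0 : ∀ q, 0 ≤ w q := by
    intro q
    have h1 : (0:ℝ) ≤ (if q ∈ S then C0 * e1 * (1/(q:ℝ)) else 0) := by
      split
      · positivity
      · exact le_refl 0
    have h2 : (0:ℝ) ≤ C2 * e1^2 * (1/((q:ℝ))^2) := by positivity
    rw [hwdef]; dsimp only; linarith
  have hWsum : ∀ Q' : Finset ℕ, ∑ q ∈ Q', w q ≤ W := by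
    intro Q'
    rw [hwdef]
    rw [Finset.sum_add_distrib]
    have h1 : ∑ q ∈ Q', (if q ∈ S then C0 * e1 * (1/(q:ℝ)) else 0)
        ≤ C0 * e1 * SS := by
      have heq : ∀ q, (if q ∈ S then C0 * e1 * (1/(q:ℝ)) else 0)
          = C0 * e1 * (if q ∈ S then 1/(q:ℝ) else 0) := by
        intro q; split <;> simp
      simp_rw [heq]
      rw [← Finset.mul_sum]
      refine mul_le_mul_of_nonneg_left ?_ (by positivity)
      rw [hSSdef]
      refine Summable.sum_le_tsum Q' (fun q _ => ?_) hS
      split <;> positivity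
    have h2 : ∑ q ∈ Q', C2 * e1^2 * (1/((q:ℝ))^2) ≤ C2 * e1^2 * Z := by
      rw [← Finset.mul_sum]
      refine mul_le_mul_of_nonneg_left ?_ (by positivity)
      rw [hZdef]
      exact Summable.sum_le_tsum Q' (fun q _ => by positivity) hZsummable
    rw [hWdef]
    linarith
  -- generic product bound
  have hProdT : ∀ (Q' : Finset ℕ) (f : ℕ → ℝ), (∀ q ∈ Q', 0 ≤ f q) →
      (∀ q ∈ Q', f q ≤ 1 + w q) → ∏ q ∈ Q', f q ≤ T := by
    intro Q' f hf hfw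
    calc ∏ q ∈ Q', f q ≤ Real.exp (∑ q ∈ Q', w q) := ThinTail.prod_le_exp_sum Q' f w hf hfw
      _ ≤ T := by rw [hTdef]; exact Real.exp_le_exp.mpr (hWsum Q')
  -- full local factor vs 1 + w q
  have hfull : ∀ q : ℕ, q.Prime → ∀ t : ℝ, 0 ≤ t → t ≤ ThinTail.tau → t ≤ e1/(q:ℝ) →
      ∑ a ∈ Finset.Icc 0 N, |g (q^a)| * t^a ≤ 1 + w q := by
    intro q hq t ht htt hte
    have hq0 : (0:ℝ) < q := by exact_mod_cast hq.pos
    by_cases hqS : q ∈ S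
    · have h := localFull_S q hq t ht htt
      have : C0 * t ≤ C0 * e1 * (1/(q:ℝ)) := by
        calc C0 * t ≤ C0 * (e1/(q:ℝ)) := mul_le_mul_of_nonneg_left hte hC0.le
          _ = C0 * e1 * (1/(q:ℝ)) := by ring
      have hw : w q = C0 * e1 * (1/(q:ℝ)) + C2 * e1^2 * (1/((q:ℝ))^2) := by
        rw [hwdef]; dsimp only; rw [if_pos hqS]
      have h2 : (0:ℝ) ≤ C2 * e1^2 * (1/((q:ℝ))^2) := by positivity
      rw [hw]; linarith
    · have h := localFull_nS q hq hqS t ht htt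
      have : C2 * t^2 ≤ C2 * e1^2 * (1/((q:ℝ))^2) := by
        have ht2 : t^2 ≤ (e1/(q:ℝ))^2 := pow_le_pow_left₀ ht hte 2
        calc C2 * t^2 ≤ C2 * (e1/(q:ℝ))^2 := mul_le_mul_of_nonneg_left ht2 hC2.le
          _ = C2 * e1^2 * (1/((q:ℝ))^2) := by rw [div_pow]; ring
      have hw : w q = C2 * e1^2 * (1/((q:ℝ))^2) := by
        rw [hwdef]; dsimp only; rw [if_neg hqS]; ring
      rw [hw]; linarith
  -- basic facts about 1/q and q^(-ss)
  have hq_half : ∀ q : ℕ, q.Prime → (1/(q:ℝ)) ≤ ThinTail.tau := by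
    intro q hq
    have h2 : (2:ℝ) ≤ q := by exact_mod_cast hq.two_le
    calc (1/(q:ℝ)) ≤ 1/2 := by
          rw [div_le_div_iff₀ (by linarith) (by norm_num)]; linarith
      _ ≤ ThinTail.tau := ThinTail.half_le_tau
  have hq_e : ∀ q : ℕ, q.Prime → (1/(q:ℝ)) ≤ e1/(q:ℝ) := by
    intro q hq
    have hq0 : (0:ℝ) < q := by exact_mod_cast hq.pos
    have : (0:ℝ) ≤ 1/(q:ℝ) := by positivity
    calc 1/(q:ℝ) = 1 * (1/(q:ℝ)) := by ring
      _ ≤ e1 * (1/(q:ℝ)) := mul_le_mul_of_nonneg_right he1_ge this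
      _ = e1/(q:ℝ) := by ring
  -- rpow facts for the weighted function
  have hrw : ∀ q a : ℕ, q.Prime → Fw (q^a) = |g (q^a)| * ((q:ℝ)^(-ss))^a := by
    intro q a hq
    have hq0 : (0:ℝ) < q := by exact_mod_cast hq.pos
    simp only [hFwdef]
    rw [Nat.cast_pow, ← Real.rpow_natCast ((q:ℝ)^(-ss)) a,
      ← Real.rpow_natCast (q:ℝ) a, ← Real.rpow_mul hq0.le, ← Real.rpow_mul hq0.le,
      mul_comm (-ss) ((a:ℕ):ℝ)]
  have hFq : ∀ q a : ℕ, q.Prime → F (q^a) = |g (q^a)| * (1/(q:ℝ))^a := by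
    intro q a hq
    simp only [hFdef]
    rw [Nat.cast_pow, div_eq_mul_inv, ← inv_pow, one_div]
  have htq_nonneg : ∀ q : ℕ, 0 ≤ (q:ℝ)^(-ss) := fun q => Real.rpow_nonneg (Nat.cast_nonneg q) _
  have htq_tau : ∀ q : ℕ, q.Prime → (q:ℝ)^(-ss) ≤ ThinTail.tau := by
    intro q hq
    have h2 : (2:ℝ) ≤ q := by exact_mod_cast hq.two_le
    have h1 : (1:ℝ) ≤ q := by linarith
    calc (q:ℝ)^(-ss) ≤ (q:ℝ)^(-(1/2):ℝ) :=
          Real.rpow_le_rpow_of_exponent_le h1 (by rw [hssdef]; linarith [hss_half])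
      _ ≤ (2:ℝ)^(-(1/2):ℝ) :=
          Real.rpow_le_rpow_of_nonpos (by norm_num) h2 (by norm_num)
      _ = ThinTail.tau := rfl
  have htq_e : ∀ q : ℕ, q.Prime → (q:ℝ) ≤ y → (q:ℝ)^(-ss) ≤ e1/(q:ℝ) := by
    intro q hq hqy
    have hq0 : (0:ℝ) < q := by exact_mod_cast hq.pos
    have hsplit : -ss = -1 + 1/Real.log y := by rw [hssdef]; ring
    rw [hsplit, Real.rpow_add hq0, Real.rpow_neg_one]
    have hexp : (q:ℝ)^(1/Real.log y) ≤ e1 := by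
      rw [Real.rpow_def_of_pos hq0, he1]
      apply Real.exp_le_exp.mpr
      have hlogq : Real.log q ≤ Real.log y := Real.log_le_log hq0 hqy
      have hlogq0 : 0 ≤ Real.log q := Real.log_nonneg (by exact_mod_cast hq.one_lt.le)
      calc Real.log q * (1/Real.log y) = Real.log q / Real.log y := by ring
        _ ≤ 1 := by rw [div_le_one hlogy0]; exact hlogq
    calc (q:ℝ)⁻¹ * (q:ℝ)^(1/Real.log y) ≤ (q:ℝ)⁻¹ * e1 := by
          exact mul_le_mul_of_nonneg_left hexp (by positivity)
      _ = e1/(q:ℝ) := by rw [div_eq_mul_inv]; ring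
  -- setup of the sums
  set R : Finset ℕ := Finset.range (N+1) with hRdef
  set A0 : Finset ℕ := R.filter (fun n => z < (n:ℝ)) with hA0def
  set A : Finset ℕ := A0.filter (fun n => F n ≠ 0) with hAdef
  have hsum0 : (∑ n ∈ R, if z < (n:ℝ) then |g n|/(n:ℝ) else 0) = ∑ n ∈ A, F n := by
    rw [hAdef, Finset.sum_filter_ne_zero, hA0def, Finset.sum_filter]
  have hAfacts : ∀ n ∈ A, n ≤ N ∧ z < (n:ℝ) ∧ g n ≠ 0 ∧ n ≠ 0 := by
    intro n hn
    rw [hAdef, Finset.mem_filter, hA0def, Finset.mem_filter, hRdef, Finset.mem_range] at hn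
    obtain ⟨⟨hnR, hnz⟩, hnF⟩ := hn
    have hn0 : n ≠ 0 := by
      rintro rfl
      simp only [Nat.cast_zero] at hnz
      linarith
    refine ⟨by omega, hnz, ?_, hn0⟩
    intro hg0
    apply hnF
    simp [hFdef, hg0]
  set sm : ℕ → Prop := fun n => ∀ p ∈ n.primeFactors, (p:ℝ) ≤ y with hsmdef
  set Ab : Finset ℕ := A.filter (fun n => ¬ sm n) with hAbdef
  have hsplit : ∑ n ∈ A, F n = ∑ n ∈ A.filter sm, F n + ∑ n ∈ Ab, F n := by
    rw [hAbdef]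
    exact (Finset.sum_filter_add_sum_filter_not A sm F).symm
  set E : ℝ := Real.exp (-(Real.log z / Real.log y)) with hEdef
  have hE0 : (0:ℝ) < E := Real.exp_pos _
  -- PART 1 : smooth part
  have part1 : ∑ n ∈ A.filter sm, F n ≤ E * T := by
    have step1 : ∀ n ∈ A.filter sm, F n ≤ E * Fw n := by
      intro n hn
      have hnA := Finset.mem_of_mem_filter n hn
      obtain ⟨hnN, hnz, hgn, hn0⟩ := hAfacts n hnA
      have hncast : (0:ℝ) < n := by exact_mod_cast Nat.pos_of_ne_zero hn0
      have hzn : z ≤ (n:ℝ) := le_of_lt hnz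
      have hFeq : F n = |g n| * (n:ℝ)^(-ss) * (n:ℝ)^(-(1/Real.log y)) := by
        simp only [hFdef]
        rw [div_eq_mul_inv, ← Real.rpow_neg_one (n:ℝ),
          show (-1:ℝ) = -ss + -(1/Real.log y) by rw [hssdef]; ring,
          Real.rpow_add hncast, ← mul_assoc]
      have hle : (n:ℝ)^(-(1/Real.log y)) ≤ E := by
        calc (n:ℝ)^(-(1/Real.log y)) ≤ z^(-(1/Real.log y)) :=
              Real.rpow_le_rpow_of_nonpos hz0 hzn (neg_nonpos.mpr (by positivity))
          _ = E := by
              rw [Real.rpow_def_of_pos hz0, hEdef]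
              congr 1
              ring
      calc F n = |g n| * (n:ℝ)^(-ss) * (n:ℝ)^(-(1/Real.log y)) := hFeq
        _ ≤ |g n| * (n:ℝ)^(-ss) * E := by
            refine mul_le_mul_of_nonneg_left hle ?_
            exact mul_nonneg (abs_nonneg _) (Real.rpow_nonneg hncast.le _)
        _ = E * Fw n := by simp only [hFwdef]; ring
    set Qy : Finset ℕ := R.filter (fun q => q.Prime ∧ (q:ℝ) ≤ y) with hQydef
    have hQyprime : ∀ q ∈ Qy, q.Prime := by
      intro q hq; rw [hQydef, Finset.mem_filter] at hq; exact hq.2.1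
    have step2 : ∑ n ∈ A.filter sm, Fw n ≤ ∏ q ∈ Qy, ∑ a ∈ Finset.Icc 0 N, Fw (q^a) := by
      refine ThinTail.sum_le_prod_local Fw hFw0 hFw1 hFwm Qy hQyprime (fun _ => Finset.Icc 0 N) _ ?_
      intro n hn
      have hnsm : sm n := (Finset.mem_filter.mp hn).2
      have hnA := Finset.mem_of_mem_filter n hn
      obtain ⟨hnN, hnz, hgn, hn0⟩ := hAfacts n hnA
      refine ⟨hn0, ?_, fun p hp => ?_⟩
      · intro p hp
        have hpp : p.Prime := Nat.prime_of_mem_primeFactors hp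
        have hpd : p ∣ n := Nat.dvd_of_mem_primeFactors hp
        have hpn : p ≤ n := Nat.le_of_dvd (Nat.pos_of_ne_zero hn0) hpd
        rw [hQydef, Finset.mem_filter, hRdef, Finset.mem_range]
        exact ⟨by omega, hpp, hnsm p hp⟩
      · rw [Finset.mem_Icc]
        exact ⟨Nat.zero_le _, le_of_lt (lt_of_lt_of_le (Nat.factorization_lt p hn0) hnN)⟩
    have step3 : ∏ q ∈ Qy, ∑ a ∈ Finset.Icc 0 N, Fw (q^a) ≤ T := by
      refine hProdT Qy _ (fun q hq => Finset.sum_nonneg fun a _ => hFw0 _) ?_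
      intro q hq
      rw [hQydef, Finset.mem_filter] at hq
      obtain ⟨hqR, hqp, hqy⟩ := hq
      rw [Finset.sum_congr rfl fun a _ => hrw q a hqp]
      exact hfull q hqp _ (htq_nonneg q) (htq_tau q hqp) (htq_e q hqp hqy)
    calc ∑ n ∈ A.filter sm, F n ≤ ∑ n ∈ A.filter sm, E * Fw n := Finset.sum_le_sum step1
      _ = E * ∑ n ∈ A.filter sm, Fw n := by rw [Finset.mul_sum]
      _ ≤ E * T := mul_le_mul_of_nonneg_left (le_trans step2 step3) hE0.le
  -- PART 2 : rough part
  set P : Finset ℕ := R.filter (fun p => p.Prime ∧ y < (p:ℝ)) with hPdef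
  have hcov : ∀ n ∈ Ab, ∃ p ∈ P, p ∣ n := by
    intro n hn
    rw [hAbdef, Finset.mem_filter] at hn
    obtain ⟨hnA, hnsm⟩ := hn
    obtain ⟨hnN, hnz, hgn, hn0⟩ := hAfacts n hnA
    have hexists : ∃ p ∈ n.primeFactors, y < (p:ℝ) := by
      by_contra hcon
      push_neg at hcon
      apply hnsm
      rw [hsmdef]
      intro p hp
      exact hcon p hp
    obtain ⟨p, hp, hpy⟩ := hexists
    refine ⟨p, ?_, Nat.dvd_of_mem_primeFactors hp⟩
    rw [hPdef, Finset.mem_filter, hRdef, Finset.mem_range]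
    have := Nat.le_of_dvd (Nat.pos_of_ne_zero hn0) (Nat.dvd_of_mem_primeFactors hp)
    exact ⟨by omega, Nat.prime_of_mem_primeFactors hp, hpy⟩
  have hcover := ThinTail.covering F Ab P (fun n _ => hF0 n) hcov
  set Q : Finset ℕ := R.filter Nat.Prime with hQdef
  have hQprime : ∀ q ∈ Q, q.Prime := fun q hq => (Finset.mem_filter.mp hq).2
  have hinner : ∀ p ∈ P, ∀ j : ℕ,
      (∀ n ∈ Ab.filter (p ∣ ·), j ≤ n.factorization p) →
      ∑ n ∈ Ab.filter (p ∣ ·), F n ≤ ((j:ℝ)+1)^k * B * (1/(p:ℝ))^j * T := by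
    intro p hp j hj
    have hpP := hp
    rw [hPdef, Finset.mem_filter, hRdef, Finset.mem_range] at hpP
    obtain ⟨hpR, hpprime, hpy⟩ := hpP
    have hpQ : p ∈ Q := by
      rw [hQdef, Finset.mem_filter, hRdef, Finset.mem_range]; exact ⟨hpR, hpprime⟩
    set σ : ℕ → Finset ℕ := fun q => if q = p then Finset.Icc j N else Finset.Icc 0 N with hσdef
    have hAmem : ∀ n ∈ Ab.filter (p ∣ ·),
        n ≠ 0 ∧ n.primeFactors ⊆ Q ∧ ∀ q ∈ Q, n.factorization q ∈ σ q := by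
      intro n hn
      have hnAb := Finset.mem_of_mem_filter n hn
      have hnA := Finset.mem_of_mem_filter n hnAb
      obtain ⟨hnN, hnz, hgn, hn0⟩ := hAfacts n hnA
      refine ⟨hn0, ?_, fun q hq => ?_⟩
      · intro q hq'
        have hqd := Nat.dvd_of_mem_primeFactors hq'
        have := Nat.le_of_dvd (Nat.pos_of_ne_zero hn0) hqd
        rw [hQdef, Finset.mem_filter, hRdef, Finset.mem_range]
        exact ⟨by omega, Nat.prime_of_mem_primeFactors hq'⟩
      · rw [hσdef]; dsimp only
        by_cases hqp : q = p
        · subst hqp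
          rw [if_pos rfl, Finset.mem_Icc]
          exact ⟨hj n hn, le_of_lt (lt_of_lt_of_le (Nat.factorization_lt q hn0) hnN)⟩
        · rw [if_neg hqp, Finset.mem_Icc]
          exact ⟨Nat.zero_le _, le_of_lt (lt_of_lt_of_le (Nat.factorization_lt q hn0) hnN)⟩
    have hstar := ThinTail.sum_le_prod_local F hF0 hF1 hFm Q hQprime σ (Ab.filter (p ∣ ·)) hAmem
    have hprod : ∏ q ∈ Q, ∑ a ∈ σ q, F (q^a)
        = (∑ a ∈ Finset.Icc j N, F (p^a)) * ∏ q ∈ Q.erase p, ∑ a ∈ σ q, F (q^a) := by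
      rw [← Finset.mul_prod_erase Q _ hpQ]
      congr 1
      rw [hσdef]; dsimp only; rw [if_pos rfl]
    have hfactor : ∑ a ∈ Finset.Icc j N, F (p^a) ≤ ((j:ℝ)+1)^k * B * (1/(p:ℝ))^j := by
      rw [Finset.sum_congr rfl fun a _ => hFq p a hpprime]
      exact localIcc p hpprime _ (by positivity) (hq_half p hpprime) j
    have hrest : ∏ q ∈ Q.erase p, ∑ a ∈ σ q, F (q^a) ≤ T := by
      refine hProdT _ _ (fun q hq => Finset.sum_nonneg fun a _ => hF0 _) ?_
      intro q hq
      have hqQ := Finset.mem_of_mem_erase hq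
      have hqneq := Finset.ne_of_mem_erase hq
      have hqprime := hQprime q hqQ
      rw [hσdef]; dsimp only; rw [if_neg hqneq]
      rw [Finset.sum_congr rfl fun a _ => hFq q a hqprime]
      exact hfull q hqprime _ (by positivity) (hq_half q hqprime) (hq_e q hqprime)
    calc ∑ n ∈ Ab.filter (p ∣ ·), F n ≤ ∏ q ∈ Q, ∑ a ∈ σ q, F (q^a) := hstar
      _ = (∑ a ∈ Finset.Icc j N, F (p^a)) * ∏ q ∈ Q.erase p, ∑ a ∈ σ q, F (q^a) := hprod
      _ ≤ ((j:ℝ)+1)^k * B * (1/(p:ℝ))^j * T := by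
          refine mul_le_mul hfactor hrest ?_ (by positivity)
          exact Finset.prod_nonneg fun q _ => Finset.sum_nonneg fun a _ => hF0 _
  -- identify the prime sum in the goal
  have hPsum0 : 0 ≤ ∑ p ∈ R, if p.Prime ∧ y < (p:ℝ) ∧ p ∈ S then 1/(p:ℝ) else 0 :=
    Finset.sum_nonneg fun p _ => by split <;> positivity
  have hPS : ∑ p ∈ P.filter (· ∈ S), (1/(p:ℝ))
      = ∑ p ∈ R, if p.Prime ∧ y < (p:ℝ) ∧ p ∈ S then 1/(p:ℝ) else 0 := by
    rw [hPdef, Finset.filter_filter, Finset.sum_filter]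
    refine Finset.sum_congr rfl fun p _ => ?_
    exact if_congr (by tauto) rfl rfl
  have part2a : ∑ p ∈ P.filter (· ∈ S), (∑ n ∈ Ab.filter (p ∣ ·), F n) ≤ C0 * T * (∑ p ∈ R, if p.Prime ∧ y < (p:ℝ) ∧ p ∈ S then 1/(p:ℝ) else 0) := by
    have hb : ∀ p ∈ P.filter (· ∈ S),
        (∑ n ∈ Ab.filter (p ∣ ·), F n) ≤ C0 * T * (1/(p:ℝ)) := by
      intro p hp
      have hpP := Finset.mem_of_mem_filter p hp
      have hpprime : p.Prime := by
        have := (Finset.mem_filter.mp hpP).2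
        exact this.1
      have h1 : ∀ n ∈ Ab.filter (p ∣ ·), 1 ≤ n.factorization p := by
        intro n hn
        have hpn : p ∣ n := (Finset.mem_filter.mp hn).2
        have hnA := Finset.mem_of_mem_filter n (Finset.mem_of_mem_filter n hn)
        obtain ⟨-, -, -, hn0⟩ := hAfacts n hnA
        exact hpprime.factorization_pos_of_dvd hn0 hpn
      calc ∑ n ∈ Ab.filter (p ∣ ·), F n
          ≤ (((1:ℕ):ℝ)+1)^k * B * (1/(p:ℝ))^1 * T := hinner p hpP 1 h1
        _ = C0 * T * (1/(p:ℝ)) := by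
            have h2 : ((1:ℕ):ℝ)+1 = 2 := by norm_num
            rw [h2, pow_one, hC0def]; ring
    calc ∑ p ∈ P.filter (· ∈ S), (∑ n ∈ Ab.filter (p ∣ ·), F n)
        ≤ ∑ p ∈ P.filter (· ∈ S), C0 * T * (1/(p:ℝ)) := Finset.sum_le_sum hb
      _ = C0 * T * ∑ p ∈ P.filter (· ∈ S), (1/(p:ℝ)) := by rw [Finset.mul_sum]
      _ = C0 * T * (∑ p ∈ R, if p.Prime ∧ y < (p:ℝ) ∧ p ∈ S then 1/(p:ℝ) else 0) := by
          rw [hPS]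
  have part2b : ∑ p ∈ P.filter (fun p => ¬ p ∈ S), (∑ n ∈ Ab.filter (p ∣ ·), F n)
      ≤ C2 * T * (2/y) := by
    have hb : ∀ p ∈ P.filter (fun p => ¬ p ∈ S),
        (∑ n ∈ Ab.filter (p ∣ ·), F n) ≤ C2 * T * (1/((p:ℝ))^2) := by
      intro p hp
      have hpP := Finset.mem_of_mem_filter p hp
      have hpS : p ∉ S := (Finset.mem_filter.mp hp).2
      have hpprime : p.Prime := by
        have := (Finset.mem_filter.mp hpP).2
        exact this.1
      have h2 : ∀ n ∈ Ab.filter (p ∣ ·), 2 ≤ n.factorization p := by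
        intro n hn
        have hpn : p ∣ n := (Finset.mem_filter.mp hn).2
        have hnA := Finset.mem_of_mem_filter n (Finset.mem_of_mem_filter n hn)
        obtain ⟨-, -, hgn, hn0⟩ := hAfacts n hnA
        by_contra hlt
        push_neg at hlt
        have h1 : 1 ≤ n.factorization p := hpprime.factorization_pos_of_dvd hn0 hpn
        have ha1 : n.factorization p = 1 := by omega
        have hc : Nat.Coprime p (n / p ^ n.factorization p) := Nat.coprime_ordCompl hpprime hn0
        have hfact := Nat.ordProj_mul_ordCompl_eq_self n p
        rw [ha1, pow_one] at hc hfact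
        have hgnn : g n = g p * g (n / p) := by
          conv_lhs => rw [← hfact]
          exact hgm p (n/p) hc
        rw [hgS p hpprime hpS, zero_mul] at hgnn
        exact hgn hgnn
      calc ∑ n ∈ Ab.filter (p ∣ ·), F n
          ≤ (((2:ℕ):ℝ)+1)^k * B * (1/(p:ℝ))^2 * T := hinner p hpP 2 h2
        _ = C2 * T * (1/((p:ℝ))^2) := by
            have h3 : ((2:ℕ):ℝ)+1 = 3 := by norm_num
            rw [h3, hC2def, div_pow, one_pow]; ring
    calc ∑ p ∈ P.filter (fun p => ¬ p ∈ S), (∑ n ∈ Ab.filter (p ∣ ·), F n)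
        ≤ ∑ p ∈ P.filter (fun p => ¬ p ∈ S), C2 * T * (1/((p:ℝ))^2) := Finset.sum_le_sum hb
      _ = C2 * T * ∑ p ∈ P.filter (fun p => ¬ p ∈ S), (1/((p:ℝ))^2) := by rw [Finset.mul_sum]
      _ ≤ C2 * T * (2/y) := by
          refine mul_le_mul_of_nonneg_left ?_ (by positivity)
          have hsub : P.filter (fun p => ¬ p ∈ S) ⊆ Finset.Ioc ⌊y⌋₊ N := by
            intro p hp
            have hpP := Finset.mem_of_mem_filter p hp
            rw [hPdef, Finset.mem_filter, hRdef, Finset.mem_range] at hpP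
            obtain ⟨hpR, hpprime, hpy⟩ := hpP
            rw [Finset.mem_Ioc]
            exact ⟨(Nat.floor_lt hy0.le).mpr hpy, by omega⟩
          have hfloor1 : 1 ≤ ⌊y⌋₊ := Nat.le_floor (by push_cast; linarith)
          calc ∑ p ∈ P.filter (fun p => ¬ p ∈ S), (1/((p:ℝ))^2)
              ≤ ∑ m ∈ Finset.Ioc ⌊y⌋₊ N, (1/((m:ℝ))^2) :=
                Finset.sum_le_sum_of_subset_of_nonneg hsub (fun m _ _ => by positivity)
            _ ≤ 1/((⌊y⌋₊:ℕ):ℝ) := ThinTail.sum_Ioc_inv_sq_le ⌊y⌋₊ hfloor1 N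
            _ ≤ 2/y := by
                have h1 : y - 1 < ((⌊y⌋₊:ℕ):ℝ) := Nat.sub_one_lt_floor y
                have h2 : y/2 ≤ ((⌊y⌋₊:ℕ):ℝ) := by linarith
                rw [div_le_div_iff₀ (by linarith) hy0]
                nlinarith
  -- final combination
  have final : ∑ n ∈ A, F n ≤ T*E + (C0*T*(∑ p ∈ R, if p.Prime ∧ y < (p:ℝ) ∧ p ∈ S then 1/(p:ℝ) else 0) + C2*T*(2/y)) := by
    rw [hsplit]
    have h2 : ∑ n ∈ Ab, F n ≤ C0*T*(∑ p ∈ R, if p.Prime ∧ y < (p:ℝ) ∧ p ∈ S then 1/(p:ℝ) else 0) + C2*T*(2/y) := by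
      calc ∑ n ∈ Ab, F n ≤ ∑ p ∈ P, ∑ n ∈ Ab.filter (p ∣ ·), F n := hcover
        _ = ∑ p ∈ P.filter (· ∈ S), (∑ n ∈ Ab.filter (p ∣ ·), F n)
            + ∑ p ∈ P.filter (fun p => ¬ p ∈ S), (∑ n ∈ Ab.filter (p ∣ ·), F n) :=
            (Finset.sum_filter_add_sum_filter_not P (· ∈ S) _).symm
        _ ≤ C0*T*(∑ p ∈ R, if p.Prime ∧ y < (p:ℝ) ∧ p ∈ S then 1/(p:ℝ) else 0) + C2*T*(2/y) := add_le_add part2a part2b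
    linarith [part1]
  have e1' : T*E ≤ (T*(1+C0+2*C2))*E := by
    refine mul_le_mul_of_nonneg_right ?_ hE0.le
    nlinarith
  have e2' : C0*T*(∑ p ∈ R, if p.Prime ∧ y < (p:ℝ) ∧ p ∈ S then 1/(p:ℝ) else 0) ≤ (T*(1+C0+2*C2))*(∑ p ∈ R, if p.Prime ∧ y < (p:ℝ) ∧ p ∈ S then 1/(p:ℝ) else 0) := by
    refine mul_le_mul_of_nonneg_right ?_ hPsum0
    nlinarith
  have e3' : C2*T*(2/y) ≤ (T*(1+C0+2*C2))*(1/y) := by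
    have heq : C2*T*(2/y) = (2*C2*T)*(1/y) := by ring
    rw [heq]
    refine mul_le_mul_of_nonneg_right ?_ (by positivity)
    nlinarith
  calc (∑ n ∈ R, if z < (n:ℝ) then |g n|/(n:ℝ) else 0)
      = ∑ n ∈ A, F n := hsum0
    _ ≤ T*E + (C0*T*(∑ p ∈ R, if p.Prime ∧ y < (p:ℝ) ∧ p ∈ S then 1/(p:ℝ) else 0) + C2*T*(2/y)) := final
    _ ≤ (T*(1+C0+2*C2))*E + ((T*(1+C0+2*C2))*(∑ p ∈ R, if p.Prime ∧ y < (p:ℝ) ∧ p ∈ S then 1/(p:ℝ) else 0) + (T*(1+C0+2*C2))*(1/y)) := by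
        linarith
    _ = T*(1+C0+2*C2) * (E + (∑ p ∈ R, if p.Prime ∧ y < (p:ℝ) ∧ p ∈ S then 1/(p:ℝ) else 0) + 1/y) := by ring

end
end
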